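/- arXiv:2111.09229 — 7 statements merged into one kernel-verified Lean document; each statement's English description precedes it below -/
import Mathlib

section
/- For every real β > 0 and every complex number z, the Mittag-Leffler function E_β is complex differentiable at z with derivative (1/β)·E_{β,β}(z), i.e. (d/dz) E_β(z) = (1/β) E_{β,β}(z) on all of ℂ. -/
open Filter Real Topology

/-- Key growth lemma: for `x ≥ 2`, `Γ(x+β) ≥ Γ(x) · x^(min β 1) / 2`. -/
lemma gamma_ratio_lower (β : ℝ) (hβ : 0 < β) {x : ℝ} (hx : 2 ≤ x) :
    Real.Gamma x * (x ^ (min β 1) / 2) ≤ Real.Gamma (x + β) := by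
  have hx0 : 0 < x := by linarith
  have hGx : 0 < Real.Gamma x := Real.Gamma_pos_of_pos hx0
  rcases le_or_gt 1 β with hβ1 | hβ1
  · -- case 1 ≤ β
    have hmin : min β 1 = 1 := min_eq_right hβ1
    rw [hmin, Real.rpow_one]
    have h1 : Real.Gamma (x + 1) ≤ Real.Gamma (x + β) := by
      rcases eq_or_lt_of_le hβ1 with h | h
      · rw [← h]
      · exact le_of_lt (Real.Gamma_strictMonoOn_Ici (by simp; linarith) (by simp; linarith)
          (by linarith))
    have h2 : Real.Gamma (x + 1) = x * Real.Gamma x := Real.Gamma_add_one (ne_of_gt hx0)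
    nlinarith
  · -- case β < 1
    have hmin : min β 1 = β := min_eq_left (le_of_lt hβ1)
    rw [hmin]
    have hxβ : 0 < x + β := by linarith
    have hGxβ : 0 < Real.Gamma (x + β) := Real.Gamma_pos_of_pos hxβ
    have h1b : 0 < 1 - β := by linarith
    have hconv := Real.Gamma_mul_add_mul_le_rpow_Gamma_mul_rpow_Gamma
      (s := x + β) (t := x + β + 1) hxβ (by linarith) hβ h1b (by ring)
    have harg : β * (x + β) + (1 - β) * (x + β + 1) = x + 1 := by ring
    rw [harg] at hconv
    have h2 : Real.Gamma (x + β + 1) = (x + β) * Real.Gamma (x + β) :=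
      Real.Gamma_add_one (ne_of_gt hxβ)
    rw [h2] at hconv
    have hP : (0:ℝ) < (x + β) ^ (1 - β) := Real.rpow_pos_of_pos hxβ _
    -- Γ(x+1) ≤ Γ(x+β) * (x+β)^(1-β)
    have h3 : Real.Gamma (x + 1) ≤ Real.Gamma (x + β) * (x + β) ^ (1 - β) := by
      calc Real.Gamma (x + 1) ≤ Real.Gamma (x + β) ^ β *
            ((x + β) * Real.Gamma (x + β)) ^ (1 - β) := hconv
        _ = Real.Gamma (x + β) ^ β * ((x + β) ^ (1 - β) * Real.Gamma (x + β) ^ (1 - β)) := by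
            rw [Real.mul_rpow (le_of_lt hxβ) (le_of_lt hGxβ)]
        _ = (Real.Gamma (x + β) ^ β * Real.Gamma (x + β) ^ (1 - β)) * (x + β) ^ (1 - β) := by
            ring
        _ = Real.Gamma (x + β) * (x + β) ^ (1 - β) := by
            rw [← Real.rpow_add hGxβ]
            norm_num
    have h4 : Real.Gamma (x + 1) = x * Real.Gamma x := Real.Gamma_add_one (ne_of_gt hx0)
    rw [h4] at h3
    -- x^β * (x+β)^(1-β) ≤ 2x
    have h5 : x ^ β * (x + β) ^ (1 - β) ≤ 2 * x := by
      have h6 : x ^ β ≤ (x + β) ^ β :=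
        Real.rpow_le_rpow (le_of_lt hx0) (by linarith) (le_of_lt hβ)
      calc x ^ β * (x + β) ^ (1 - β) ≤ (x + β) ^ β * (x + β) ^ (1 - β) := by
            exact mul_le_mul_of_nonneg_right h6 (le_of_lt hP)
        _ = (x + β) ^ (1:ℝ) := by rw [← Real.rpow_add hxβ]; norm_num
        _ = x + β := Real.rpow_one _
        _ ≤ 2 * x := by linarith
    -- combine
    have hxb : (0:ℝ) ≤ x ^ β := le_of_lt (Real.rpow_pos_of_pos hx0 _)
    have h7 : Real.Gamma x * x ^ β * (x + β) ^ (1 - β) ≤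
        (2 * Real.Gamma (x + β)) * (x + β) ^ (1 - β) := by
      calc Real.Gamma x * x ^ β * (x + β) ^ (1 - β)
          = Real.Gamma x * (x ^ β * (x + β) ^ (1 - β)) := by ring
        _ ≤ Real.Gamma x * (2 * x) := by
            exact mul_le_mul_of_nonneg_left h5 (le_of_lt hGx)
        _ = 2 * (x * Real.Gamma x) := by ring
        _ ≤ 2 * (Real.Gamma (x + β) * (x + β) ^ (1 - β)) := by linarith
        _ = (2 * Real.Gamma (x + β)) * (x + β) ^ (1 - β) := by ring
    have h8 : Real.Gamma x * x ^ β ≤ 2 * Real.Gamma (x + β) :=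
      le_of_mul_le_mul_right h7 hP
    linarith

/-- Summability of the dominating series. -/
lemma summable_u (β : ℝ) (hβ : 0 < β) (R : ℝ) (hR : 1 ≤ R) :
    Summable (fun n : ℕ => (n : ℝ) * R ^ (n - 1) / Real.Gamma (β * n + 1)) := by
  have hR0 : (0:ℝ) < R := by linarith
  apply summable_of_ratio_norm_eventually_le (r := 1/2) (by norm_num)
  have hlin : Tendsto (fun n : ℕ => β * n + 1) atTop atTop :=
    tendsto_atTop_add_const_right _ _
      ((tendsto_natCast_atTop_atTop (R := ℝ)).const_mul_atTop hβ)
  have htend : Tendsto (fun n : ℕ => (β * n + 1) ^ (min β 1)) atTop atTop :=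
    (tendsto_rpow_atTop (by positivity : 0 < min β 1)).comp hlin
  have h1 : ∀ᶠ n : ℕ in atTop, 2 ≤ β * n + 1 := hlin.eventually_ge_atTop 2
  have h2 : ∀ᶠ n : ℕ in atTop, 8 * R ≤ (β * n + 1) ^ (min β 1) :=
    htend.eventually_ge_atTop (8 * R)
  filter_upwards [h1, h2, eventually_ge_atTop 1] with n hn1 hn2 hn3
  have hG1 : 0 < Real.Gamma (β * n + 1) := Real.Gamma_pos_of_pos (by positivity)
  have hG2 : 0 < Real.Gamma (β * (n + 1 : ℕ) + 1) := Real.Gamma_pos_of_pos (by positivity)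
  have harg : β * ((n + 1 : ℕ) : ℝ) + 1 = (β * n + 1) + β := by push_cast; ring
  have hkey := gamma_ratio_lower β hβ hn1
  have hG2' : 4 * R * Real.Gamma (β * n + 1) ≤ Real.Gamma (β * (n + 1 : ℕ) + 1) := by
    rw [harg]
    calc 4 * R * Real.Gamma (β * n + 1)
        ≤ Real.Gamma (β * n + 1) * ((β * n + 1) ^ (min β 1) / 2) := by nlinarith
      _ ≤ Real.Gamma ((β * n + 1) + β) := hkey
  have hpow : R ^ ((n + 1 : ℕ) - 1) = R ^ (n - 1) * R := by
    have h : (n + 1 : ℕ) - 1 = (n - 1) + 1 := by omega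
    rw [h, pow_succ]
  have hnn : ((n:ℝ) + 1) ≤ 2 * n := by
    have : (1:ℝ) ≤ (n:ℝ) := by exact_mod_cast hn3
    linarith
  have hnpos : (0:ℝ) < n := by
    have : (1:ℝ) ≤ (n:ℝ) := by exact_mod_cast hn3
    linarith
  rw [Real.norm_of_nonneg (by positivity), Real.norm_of_nonneg (by positivity)]
  rw [show (1:ℝ)/2 * ((n:ℝ) * R ^ (n-1) / Real.Gamma (β * n + 1))
      = (1/2 * ((n:ℝ) * R ^ (n-1))) / Real.Gamma (β * n + 1) by ring]
  rw [div_le_div_iff₀ hG2 hG1]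
  push_cast at hG2' hpow ⊢
  rw [hpow]
  have hRn : (0:ℝ) ≤ R ^ (n - 1) := by positivity
  nlinarith [mul_le_mul_of_nonneg_left hG2' (mul_nonneg (mul_nonneg hnpos.le hRn) (by norm_num : (0:ℝ) ≤ 1/2)),
    mul_nonneg (mul_nonneg hRn hR0.le) hG1.le]

/-- The generalized Mittag-Leffler function `E_{β,ρ}(z) = ∑_{n=0}^∞ z^n / Γ(βn + ρ)`. -/
noncomputable def mittagLeffler (β ρ : ℝ) (z : ℂ) : ℂ :=
  ∑' n : ℕ, z ^ n / (Real.Gamma (β * n + ρ) : ℂ)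

/-- For every `β > 0` and every `z : ℂ`, the Mittag-Leffler function `E_β = E_{β,1}` is
complex differentiable at `z` with derivative `(1/β) · E_{β,β}(z)`. -/
theorem hasDerivAt_mittagLeffler (β : ℝ) (hβ : 0 < β) (z : ℂ) :
    HasDerivAt (mittagLeffler β 1) ((1 / (β : ℂ)) * mittagLeffler β β z) z := by
  set R : ℝ := ‖z‖ + 1 with hR
  have hR1 : 1 ≤ R := by rw [hR]; linarith [norm_nonneg z]
  have hu := summable_u β hβ R hR1
  set g : ℕ → ℂ → ℂ := fun n w => w ^ n / (Real.Gamma (β * n + 1) : ℂ) with hg_def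
  set g' : ℕ → ℂ → ℂ := fun n w => (n : ℂ) * w ^ (n - 1) / (Real.Gamma (β * n + 1) : ℂ)
    with hg'_def
  have hGpos : ∀ n : ℕ, 0 < Real.Gamma (β * n + 1) := fun n =>
    Real.Gamma_pos_of_pos (by positivity)
  have hg : ∀ n y, y ∈ Metric.ball (0:ℂ) R → HasDerivAt (g n) (g' n y) y := fun n y _ =>
    (hasDerivAt_pow n y).div_const _
  have hbound : ∀ n (y : ℂ), ‖y‖ ≤ R →
      ‖g' n y‖ ≤ (n : ℝ) * R ^ (n - 1) / Real.Gamma (β * n + 1) := by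
    intro n y hy
    have heq : ‖g' n y‖ = (n : ℝ) * ‖y‖ ^ (n - 1) / Real.Gamma (β * n + 1) := by
      rw [hg'_def]
      simp only [norm_div, norm_mul, norm_pow, Complex.norm_natCast, Complex.norm_real,
        Real.norm_of_nonneg (hGpos n).le]
    rw [heq]
    gcongr
  have hg' : ∀ n y, y ∈ Metric.ball (0:ℂ) R →
      ‖g' n y‖ ≤ (n : ℝ) * R ^ (n - 1) / Real.Gamma (β * n + 1) := by
    intro n y hy
    apply hbound
    rw [Metric.mem_ball, dist_zero_right] at hy
    linarith
  have hg0 : Summable fun n => g n 0 := by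
    apply summable_of_ne_finset_zero (s := {0})
    intro n hn
    simp only [Finset.mem_singleton] at hn
    simp [hg_def, zero_pow hn]
  have hz : z ∈ Metric.ball (0:ℂ) R := by
    rw [Metric.mem_ball, dist_zero_right]; linarith
  have hder := hasDerivAt_tsum_of_isPreconnected hu Metric.isOpen_ball
    (convex_ball (0:ℂ) R).isPreconnected hg hg' (Metric.mem_ball_self (by linarith)) hg0 hz
  have hsum' : Summable fun n => g' n z :=
    Summable.of_norm_bounded hu fun n => hg' n z hz
  have key : (∑' n : ℕ, g' n z) = (1 / (β : ℂ)) * mittagLeffler β β z := by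
    rw [Summable.tsum_eq_zero_add hsum']
    have h0 : g' 0 z = 0 := by simp [hg'_def]
    rw [h0, zero_add]
    have hterm : ∀ n : ℕ, g' (n + 1) z =
        (1 / (β : ℂ)) * (z ^ n / (Real.Gamma (β * n + β) : ℂ)) := by
      intro n
      have hne : β * n + β ≠ 0 := by positivity
      have hGadd : Real.Gamma (β * (n + 1 : ℕ) + 1) = (β * n + β) * Real.Gamma (β * n + β) := by
        have : β * ((n + 1 : ℕ) : ℝ) + 1 = (β * n + β) + 1 := by push_cast; ring
        rw [this, Real.Gamma_add_one hne]
      have hGne : (Real.Gamma (β * n + β) : ℂ) ≠ 0 := by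
        exact_mod_cast (Real.Gamma_pos_of_pos (by positivity : (0:ℝ) < β * n + β)).ne'
      have hβc : (β : ℂ) ≠ 0 := by exact_mod_cast hβ.ne'
      have hne2 : ((β : ℂ) * n + β) ≠ 0 := by
        have : ((β * n + β : ℝ) : ℂ) ≠ 0 := by exact_mod_cast hne
        push_cast at this
        convert this using 2
      rw [hg'_def]
      simp only [Nat.add_sub_cancel]
      rw [show ((Real.Gamma (β * ((n + 1 : ℕ) : ℝ) + 1) : ℝ) : ℂ)
          = ((β * n + β : ℝ) : ℂ) * ((Real.Gamma (β * n + β) : ℝ) : ℂ) by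
        rw [show β * ((n + 1 : ℕ) : ℝ) + 1 = (β * n + β) + 1 by push_cast; ring,
          Real.Gamma_add_one hne]
        push_cast
        ring]
      push_cast at hne2 ⊢
      field_simp
    rw [tsum_congr hterm, tsum_mul_left]
    rfl
  rw [← key]
  exact hder
end

section
/- Let 0 < β ≤ 1. If the Mittag-Leffler function satisfies the multiplicative functional equation E_β(−(x+y)) = E_β(−x)·E_β(−y) for all real x, y ≥ 0, then β = 1 (equivalently, E_β is the exponential function). -/
open Real Filter
open scoped Nat

/-- The (real-valued) Mittag-Leffler function `E_β(x) = ∑_{n=0}^∞ x^n / Γ(βn + 1)`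
for real arguments. -/
noncomputable def mittagLefflerReal (β x : ℝ) : ℝ :=
  ∑' n : ℕ, x ^ n / Real.Gamma (β * n + 1)

private lemma gammaMono {x y : ℝ} (hx : 2 ≤ x) (hxy : x ≤ y) :
    Real.Gamma x ≤ Real.Gamma y :=
  Real.Gamma_strictMonoOn_Ici.monotoneOn (Set.mem_Ici.mpr hx)
    (Set.mem_Ici.mpr (hx.trans hxy)) hxy

private lemma gammaLeOne {x : ℝ} (h1 : 1 ≤ x) (h2 : x ≤ 2) : Real.Gamma x ≤ 1 := by
  have h := Real.convexOn_Gamma.le_on_segment (x := (1:ℝ)) (y := (2:ℝ)) (z := x)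
    (by norm_num) (by norm_num)
    (by rw [segment_eq_Icc (by norm_num : (1:ℝ) ≤ 2)]; exact ⟨h1, h2⟩)
  simpa [Real.Gamma_one, Real.Gamma_two] using h

private lemma gammaLeFactorial {t : ℝ} (n : ℕ) (h1 : 1 ≤ t) (h2 : t ≤ n + 1) :
    Real.Gamma t ≤ n ! := by
  rcases le_or_gt t 2 with hc | hc
  · exact (gammaLeOne h1 hc).trans (Nat.one_le_cast.mpr (Nat.factorial_pos n))
  · calc Real.Gamma t ≤ Real.Gamma ((n:ℝ) + 1) := gammaMono hc.le h2
      _ = n ! := Real.Gamma_nat_eq_factorial n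

private lemma mlSummable {β : ℝ} (hβ : 0 < β) (x : ℝ) :
    Summable (fun n : ℕ => x ^ n / Real.Gamma (β * n + 1)) := by
  have hΓpos : ∀ n : ℕ, 0 < Real.Gamma (β * n + 1) := fun n =>
    Real.Gamma_pos_of_pos (by positivity)
  set y : ℝ := 2 * (|x| + 1) with hydef
  have hy1 : 1 ≤ y := by nlinarith [abs_nonneg x]
  obtain ⟨q, hq⟩ := exists_nat_ge (2 / β)
  have hq2 : 2 ≤ β * q := by
    rw [div_le_iff₀ hβ] at hq; linarith
  obtain ⟨k, hk⟩ := exists_nat_ge (y ^ q)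
  have key : ∀ n : ℕ, q * (k + 1) ≤ n → y ^ n ≤ Real.Gamma (β * n + 1) := by
    intro n hn
    have hn' : ((q * (k + 1) : ℕ) : ℝ) ≤ n := Nat.cast_le.mpr hn
    push_cast at hn'
    set m := Nat.floor (β * n) with hmdef
    have hm1 : (m : ℝ) ≤ β * n := Nat.floor_le (by positivity)
    have hm2 : β * (n:ℝ) < m + 1 := Nat.lt_floor_add_one _
    have hq0 : (0:ℝ) ≤ q := Nat.cast_nonneg q
    have hn0 : (0:ℝ) ≤ n := Nat.cast_nonneg n
    have hβn : 2 * ((k:ℝ) + 1) ≤ β * n := by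
      have h1 : (β * q) * ((k:ℝ) + 1) ≤ β * n := by
        have := mul_le_mul_of_nonneg_left hn' hβ.le
        calc (β * q) * ((k:ℝ) + 1) = β * ((q:ℝ) * (k+1)) := by ring
          _ ≤ β * n := this
      nlinarith
    have hkm : k + 1 ≤ m := by
      have h' : ((k + 1 : ℕ) : ℝ) < (m : ℝ) := by push_cast; nlinarith
      exact (Nat.cast_lt.mp h').le
    have hqmk : n ≤ q * (m - k) := by
      have hc : ((m - k : ℕ) : ℝ) = (m : ℝ) - k := by
        rw [Nat.cast_sub (le_trans (Nat.le_succ k) hkm)]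
      have hr : (n : ℝ) ≤ (q : ℝ) * ((m:ℝ) - k) := by nlinarith
      have : (n : ℝ) ≤ ((q * (m - k) : ℕ) : ℝ) := by push_cast [hc]; linarith [hr]
      exact_mod_cast this
    have h1 : y ^ n ≤ ((k:ℝ) + 1) ^ (m - k) := by
      calc y ^ n ≤ y ^ (q * (m - k)) := pow_le_pow_right₀ hy1 hqmk
        _ = (y ^ q) ^ (m - k) := by rw [pow_mul]
        _ ≤ ((k:ℝ) + 1) ^ (m - k) := by
            apply pow_le_pow_left₀ (by positivity) (by linarith)
    have h2 : ((k:ℝ) + 1) ^ (m - k) ≤ (m ! : ℝ) := by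
      have hfac := Nat.factorial_mul_pow_le_factorial (m := k) (n := m - k)
      rw [Nat.add_sub_cancel' (le_trans (Nat.le_succ k) hkm)] at hfac
      have h' : (k + 1) ^ (m - k) ≤ m ! :=
        le_trans (Nat.le_mul_of_pos_left _ (Nat.factorial_pos k)) hfac
      exact_mod_cast h'
    have h3 : (m ! : ℝ) ≤ Real.Gamma (β * n + 1) := by
      rw [← Real.Gamma_nat_eq_factorial]
      have hm1' : (1:ℝ) ≤ m := Nat.one_le_cast.mpr (by omega)
      exact gammaMono (by linarith) (by linarith)
    linarith
  have hbound : ∀ᶠ n : ℕ in cofinite, ‖x ^ n / Real.Gamma (β * n + 1)‖ ≤ (1/2 : ℝ) ^ n := by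
    rw [Nat.cofinite_eq_atTop]
    filter_upwards [eventually_ge_atTop (q * (k + 1))] with n hn
    have hkey := key n hn
    have hyp : (0:ℝ) < y ^ n := by positivity
    rw [norm_div, Real.norm_eq_abs, Real.norm_eq_abs, abs_of_pos (hΓpos n), abs_pow]
    calc |x| ^ n / Real.Gamma (β * n + 1) ≤ |x| ^ n / y ^ n := by
          gcongr
      _ = (|x| / y) ^ n := (div_pow _ _ _).symm
      _ ≤ (1/2 : ℝ) ^ n := by
          apply pow_le_pow_left₀ (by positivity)
          rw [div_le_div_iff₀ (by linarith) (by norm_num)]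
          nlinarith [abs_nonneg x]
  exact Summable.of_norm_bounded_eventually summable_geometric_two hbound


set_option maxHeartbeats 1000000

/-- Let `0 < β ≤ 1`. If `E_β(-(x+y)) = E_β(-x) · E_β(-y)` for all reals `x, y ≥ 0`,
then `β = 1` (i.e. `E_β` is the exponential function). -/
theorem mittagLeffler_multiplicative_iff_beta_eq_one (β : ℝ) (hβ : 0 < β) (hβ1 : β ≤ 1)
    (h : ∀ x y : ℝ, 0 ≤ x → 0 ≤ y →
      mittagLefflerReal β (-(x + y)) = mittagLefflerReal β (-x) * mittagLefflerReal β (-y)) :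
    β = 1 := by
  by_contra hne
  have hβlt : β < 1 := lt_of_le_of_ne hβ1 hne
  set g : ℝ → ℝ := mittagLefflerReal β with hg
  have hΓpos : ∀ n : ℕ, 0 < Real.Gamma (β * n + 1) := fun n =>
    Real.Gamma_pos_of_pos (by positivity)
  set c : ℕ → ℝ := fun n => 1 / Real.Gamma (β * n + 1) with hc
  set p := FormalMultilinearSeries.ofScalars ℝ c with hp
  have hnorm : ∀ n, ‖p n‖ = c n := fun n => by
    rw [hp, FormalMultilinearSeries.ofScalars_norm]
    exact Real.norm_of_nonneg (by rw [hc]; positivity)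
  have hrad : p.radius = ⊤ := by
    apply FormalMultilinearSeries.radius_eq_top_of_summable_norm
    intro r
    simp only [hnorm]
    exact (mlSummable hβ (r : ℝ)).congr fun n => by rw [hc]; ring
  have hsum_eq : p.sum = g := by
    funext x
    have h1 : p.sum x = ∑' n : ℕ, c n • x ^ n :=
      FormalMultilinearSeries.ofScalars_sum_eq c x
    rw [h1, hg]
    simp only [mittagLefflerReal, hc, smul_eq_mul]
    exact tsum_congr fun n => by ring
  have hball : HasFPowerSeriesOnBall g p 0 ⊤ := by
    have H := p.hasFPowerSeriesOnBall (by rw [hrad]; exact ENNReal.zero_lt_top)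
    rw [hrad, hsum_eq] at H
    exact H
  have hana : AnalyticOnNhd ℝ g Set.univ := fun z _ =>
    hball.analyticAt_of_mem (by simpa using edist_lt_top z 0)
  have hID : ∀ F : ℝ → ℝ, AnalyticOnNhd ℝ F Set.univ → (∀ t : ℝ, 0 ≤ t → F t = 0) →
      ∀ t, F t = 0 := by
    intro F hF h0 t
    have hEq : Set.EqOn F 0 Set.univ := by
      apply hF.eqOn_zero_of_preconnected_of_eventuallyEq_zero isPreconnected_univ
        (Set.mem_univ (1:ℝ))
      exact Filter.eventuallyEq_of_mem (Ioi_mem_nhds one_pos) fun s hs => h0 s (le_of_lt hs)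
    exact hEq (Set.mem_univ t)
  have hcomp : ∀ a b : ℝ, AnalyticOnNhd ℝ (fun t : ℝ => g (a * t + b)) Set.univ := by
    intro a b
    exact hana.comp ((analyticOnNhd_const.mul analyticOnNhd_id).add analyticOnNhd_const)
      (Set.mapsTo_univ _ _)
  have step1 : ∀ y : ℝ, 0 ≤ y → ∀ x : ℝ, g (-(x + y)) = g (-x) * g (-y) := by
    intro y hy
    have hF : AnalyticOnNhd ℝ (fun x : ℝ => g (-(x + y)) - g (-x) * g (-y)) Set.univ := by
      have e1 : (fun x : ℝ => g (-(x + y))) = fun x => g ((-1) * x + (-y)) := by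
        funext x; congr 1; ring
      have e2 : (fun x : ℝ => g (-x)) = fun x => g ((-1) * x + 0) := by
        funext x; congr 1; ring
      apply AnalyticOnNhd.sub
      · rw [e1]; exact hcomp (-1) (-y)
      · exact AnalyticOnNhd.mul (by rw [e2]; exact hcomp (-1) 0) analyticOnNhd_const
    intro x
    have := hID _ hF (fun t ht => sub_eq_zero.mpr (h t y ht hy)) x
    linarith [this]
  have step2 : ∀ x y : ℝ, g (-(x + y)) = g (-x) * g (-y) := by
    intro x
    have hF : AnalyticOnNhd ℝ (fun y : ℝ => g (-(x + y)) - g (-x) * g (-y)) Set.univ := by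
      have e1 : (fun y : ℝ => g (-(x + y))) = fun y => g ((-1) * y + (-x)) := by
        funext y; congr 1; ring
      have e2 : (fun y : ℝ => g (-y)) = fun y => g ((-1) * y + 0) := by
        funext y; congr 1; ring
      apply AnalyticOnNhd.sub
      · rw [e1]; exact hcomp (-1) (-x)
      · exact AnalyticOnNhd.mul analyticOnNhd_const (by rw [e2]; exact hcomp (-1) 0)
    intro y
    have := hID _ hF (fun t ht => sub_eq_zero.mpr (step1 t ht x)) y
    linarith [this]
  have FE : ∀ u v : ℝ, g (u + v) = g u * g v := by
    intro u v
    have := step2 (-u) (-v)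
    simpa [add_comm] using this
  -- endgame
  set A : ℝ := g 1 with hA
  have hA1 : 1 ≤ A := by
    have hts := Summable.le_tsum (mlSummable hβ (1:ℝ)) 0 (fun j _ => by positivity)
    simp only [pow_zero, Nat.cast_zero, mul_zero, zero_add, Real.Gamma_one, div_one] at hts
    rw [hA, hg]
    exact hts
  have hA0 : (0:ℝ) < A := lt_of_lt_of_le one_pos hA1
  have hgn : ∀ n : ℕ, g (n : ℝ) = A ^ n := by
    intro n
    induction n with
    | zero =>
      rw [Nat.cast_zero, pow_zero, hg]
      show mittagLefflerReal β 0 = 1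
      rw [mittagLefflerReal, tsum_eq_single 0 (fun b hb => by rw [zero_pow hb, zero_div])]
      norm_num [Real.Gamma_one]
    | succ n ih =>
      rw [Nat.cast_succ, FE (n : ℝ) 1, ih, ← hA, pow_succ]
  -- choose a large n
  obtain ⟨n, hn⟩ := exists_nat_ge (max 3 (Real.exp ((Real.log A + Real.log 2 + 1) / (1 - β))))
  have hn3 : (3:ℝ) ≤ n := le_trans (le_max_left _ _) hn
  have hnn0 : (0:ℝ) < n := by linarith
  have hnlog : Real.log A + Real.log 2 + 1 ≤ (1 - β) * Real.log n := by
    have h1 : Real.exp ((Real.log A + Real.log 2 + 1) / (1 - β)) ≤ n :=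
      le_trans (le_max_right _ _) hn
    have h2 : (Real.log A + Real.log 2 + 1) / (1 - β) ≤ Real.log n := by
      rw [← Real.log_exp ((Real.log A + Real.log 2 + 1) / (1 - β))]
      exact Real.log_le_log (Real.exp_pos _) h1
    rw [div_le_iff₀ (by linarith)] at h2
    linarith
  set s : ℕ := Nat.ceil (β * (n:ℝ)) with hsdef
  have hs0 : 0 < s := Nat.ceil_pos.mpr (by positivity)
  have hs1 : (1:ℝ) ≤ s := Nat.one_le_cast.mpr hs0
  have hsle : (s:ℝ) ≤ β * n + 1 := le_of_lt (Nat.ceil_lt_add_one (by positivity))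
  have hsge : β * (n:ℝ) ≤ s := Nat.le_ceil _
  have hs2n : (s:ℝ) ≤ 2 * n := by nlinarith
  -- Gamma bound
  have hΓs : Real.Gamma (β * n + 1) ≤ (s ! : ℝ) :=
    gammaLeFactorial s (by nlinarith [mul_nonneg hβ.le (Nat.cast_nonneg n)]) (by push_cast; linarith)
  have hfs : ((s !  : ℕ) : ℝ) ≤ (s:ℝ) ^ s := by exact_mod_cast Nat.factorial_le_pow s
  -- log inequality
  have hlog2pos : (0:ℝ) < Real.log 2 := Real.log_pos (by norm_num)
  have hlog2lt : Real.log 2 < 0.6931471808 := Real.log_two_lt_d9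
  have hlogs : (s:ℝ) * Real.log s ≤ (β * n + 1) * Real.log (2 * n) := by
    have hls : Real.log s ≤ Real.log (2 * n) := Real.log_le_log (by positivity) (by linarith)
    have hls0 : (0:ℝ) ≤ Real.log s := Real.log_nonneg hs1
    have hl2n0 : (0:ℝ) ≤ Real.log (2 * n) := le_trans hls0 hls
    nlinarith
  have hlogn1 : 1 ≤ Real.log n := by
    have he : Real.exp 1 ≤ (n:ℝ) := by
      have := Real.exp_one_lt_d9
      linarith
    calc (1:ℝ) = Real.log (Real.exp 1) := (Real.log_exp 1).symm
      _ ≤ Real.log n := Real.log_le_log (Real.exp_pos 1) he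
  have hlogA0 : (0:ℝ) ≤ Real.log A := Real.log_nonneg hA1
  have hlogn_lt : Real.log n ≤ (n:ℝ) - 1 := by
    have := Real.log_le_sub_one_of_pos hnn0
    linarith
  have hmain : (n:ℝ) * Real.log A + s * Real.log s < n * Real.log n := by
    have hlog2n : Real.log (2 * n) = Real.log 2 + Real.log n :=
      Real.log_mul two_ne_zero (ne_of_gt hnn0)
    have key2 : (Real.log A + Real.log 2 + 1) * n ≤ (1 - β) * Real.log n * n :=
      mul_le_mul_of_nonneg_right hnlog hnn0.le
    have hb2 : (0:ℝ) ≤ (1 - β) * ((n:ℝ) * Real.log 2) := by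
      apply mul_nonneg (by linarith)
      positivity
    have e2 : (1 - β) * Real.log n * (n:ℝ)
        = (n:ℝ) * Real.log n - β * n * Real.log n := by ring
    have e3 : (β * (n:ℝ) + 1) * (Real.log 2 + Real.log n)
        = β * n * Real.log 2 + β * n * Real.log n + Real.log 2 + Real.log n := by ring
    have e4 : (1 - β) * ((n:ℝ) * Real.log 2) = (n:ℝ) * Real.log 2 - β * n * Real.log 2 := by
      ring
    have e5 : (Real.log A + Real.log 2 + 1) * (n:ℝ)
        = (n:ℝ) * Real.log A + n * Real.log 2 + n := by ring
    rw [hlog2n, e3] at hlogs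
    rw [e2] at key2
    rw [e5] at key2
    rw [e4] at hb2
    linarith
  have hcontr : A ^ n * (s:ℝ) ^ s < (n:ℝ) ^ n := by
    have hApow : (0:ℝ) < A ^ n := pow_pos hA0 n
    have hspow : (0:ℝ) < (s:ℝ) ^ s := pow_pos (by linarith) s
    calc A ^ n * (s:ℝ) ^ s
        = Real.exp (Real.log (A ^ n * (s:ℝ) ^ s)) := (Real.exp_log (by positivity)).symm
      _ = Real.exp ((n:ℝ) * Real.log A + s * Real.log s) := by
          rw [Real.log_mul (ne_of_gt hApow) (ne_of_gt hspow), Real.log_pow, Real.log_pow]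
      _ < Real.exp ((n:ℝ) * Real.log n) := Real.exp_lt_exp.mpr hmain
      _ = (n:ℝ) ^ n := by rw [← Real.log_pow, Real.exp_log (by positivity)]
  have hlow : (n:ℝ) ^ n / Real.Gamma (β * n + 1) ≤ g (n : ℝ) := by
    have hts := Summable.le_tsum (mlSummable hβ ((n:ℕ) : ℝ)) n
      (fun j _ => div_nonneg (by positivity) (Real.Gamma_pos_of_pos (by positivity)).le)
    rw [hg]
    exact hts
  have h5 : A ^ n < (n:ℝ) ^ n / Real.Gamma (β * n + 1) := by
    rw [lt_div_iff₀ (hΓpos n)]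
    calc A ^ n * Real.Gamma (β * n + 1) ≤ A ^ n * (s:ℝ) ^ s := by
          apply mul_le_mul_of_nonneg_left (le_trans hΓs hfs) (pow_pos hA0 n).le
      _ < (n:ℝ) ^ n := hcontr
  have := hgn n
  linarith
end

section
/- Let 0 < β ≤ 1, a ≥ 0, let (Ω, 𝓕, μ) be a probability space and X : Ω → ℝ a random variable such that for every λ ∈ ℝ the function exp(λX) is integrable and ∫_Ω e^{λX} dμ = E_β(λ²a/2). Then for every n ∈ ℕ₀ the powers of X are integrable with ∫_Ω X^{2n+1} dμ = 0 and ∫_Ω X^{2n} dμ = (2n)!/(2^n Γ(βn+1)) · a^n. -/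
open MeasureTheory

/-- single term bound: |y|^k / k! ≤ exp |y| -/
lemma aux_pow_div_fact_le_exp (y : ℝ) (k : ℕ) : |y| ^ k / k.factorial ≤ Real.exp |y| := by
  have h := Real.sum_le_exp_of_nonneg (abs_nonneg y) (k + 1)
  refine le_trans ?_ h
  have : |y| ^ k / k.factorial = ∑ i ∈ Finset.range (k+1), if i = k then |y|^i / i.factorial else 0 := by
    simp
  rw [this]
  apply Finset.sum_le_sum
  intro i hi
  split
  · exact le_rfl
  · positivity

lemma aux_exp_abs_le (y : ℝ) : Real.exp |y| ≤ Real.exp y + Real.exp (-y) := by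
  rcases abs_cases y with ⟨h, _⟩ | ⟨h, _⟩
  · rw [h]; nlinarith [Real.exp_pos (-y)]
  · rw [h]; nlinarith [Real.exp_pos y]

lemma aux_exp_abs_int {Ω : Type*} [MeasurableSpace Ω] (μ : Measure Ω) (X : Ω → ℝ)
    (hXm : AEMeasurable X μ)
    (hint : ∀ l : ℝ, Integrable (fun ω => Real.exp (l * X ω)) μ) (l : ℝ) :
    Integrable (fun ω => Real.exp (|l| * |X ω|)) μ := by
  refine ((hint |l|).add (hint (-|l|))).mono'
    (Real.measurable_exp.comp_aemeasurable ((measurable_abs.comp_aemeasurable hXm).const_mul |l|)).aestronglyMeasurable ?_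
  filter_upwards with ω
  have h1 : |l| * |X ω| = |(|l| * X ω)| := by rw [abs_mul, abs_abs]
  rw [Real.norm_eq_abs, abs_of_pos (Real.exp_pos _), h1]
  calc Real.exp |(|l| * X ω)| ≤ Real.exp (|l| * X ω) + Real.exp (-(|l| * X ω)) :=
        aux_exp_abs_le _
    _ = Real.exp (|l| * X ω) + Real.exp (-|l| * X ω) := by rw [neg_mul]

lemma aux_int_pow {Ω : Type*} [MeasurableSpace Ω] (μ : Measure Ω) (X : Ω → ℝ)
    (hXm : AEMeasurable X μ)
    (hint : ∀ l : ℝ, Integrable (fun ω => Real.exp (l * X ω)) μ) (l : ℝ) (k : ℕ) :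
    Integrable (fun ω => (l * X ω) ^ k / k.factorial) μ := by
  refine (aux_exp_abs_int μ X hXm hint l).mono'
    ((((aemeasurable_const.mul hXm).pow_const k).div_const _).aestronglyMeasurable) ?_
  filter_upwards with ω
  rw [Real.norm_eq_abs, abs_div, abs_pow, Nat.abs_cast]
  calc |l * X ω| ^ k / k.factorial ≤ Real.exp |l * X ω| := aux_pow_div_fact_le_exp _ _
    _ = Real.exp (|l| * |X ω|) := by rw [abs_mul]

lemma aux_summable_norm_int {Ω : Type*} [MeasurableSpace Ω] (μ : Measure Ω) (X : Ω → ℝ)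
    (hXm : AEMeasurable X μ)
    (hint : ∀ l : ℝ, Integrable (fun ω => Real.exp (l * X ω)) μ) (l : ℝ) :
    Summable (fun k : ℕ => ∫ ω, ‖(l * X ω) ^ k / k.factorial‖ ∂μ) := by
  apply summable_of_sum_range_le (c := ∫ ω, Real.exp (|l| * |X ω|) ∂μ)
  · intro k; exact integral_nonneg fun ω => norm_nonneg _
  · intro N
    rw [← integral_finset_sum _ (fun k _ => (aux_int_pow μ X hXm hint l k).norm)]
    refine integral_mono (integrable_finset_sum _ (fun k _ => (aux_int_pow μ X hXm hint l k).norm))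
      (aux_exp_abs_int μ X hXm hint l) fun ω => ?_
    calc ∑ k ∈ Finset.range N, ‖(l * X ω) ^ k / k.factorial‖
        = ∑ k ∈ Finset.range N, |l * X ω| ^ k / k.factorial := by
          refine Finset.sum_congr rfl fun k _ => ?_
          rw [Real.norm_eq_abs, abs_div, abs_pow, Nat.abs_cast]
      _ ≤ Real.exp |l * X ω| := Real.sum_le_exp_of_nonneg (abs_nonneg _) N
      _ = Real.exp (|l| * |X ω|) := by rw [abs_mul]

lemma aux_hasSum_mgf {Ω : Type*} [MeasurableSpace Ω] (μ : Measure Ω) (X : Ω → ℝ)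
    (hXm : AEMeasurable X μ)
    (hint : ∀ l : ℝ, Integrable (fun ω => Real.exp (l * X ω)) μ) (l : ℝ) :
    HasSum (fun k : ℕ => (∫ ω, X ω ^ k ∂μ) / k.factorial * l ^ k)
      (∫ ω, Real.exp (l * X ω) ∂μ) := by
  have hGint := aux_int_pow μ X hXm hint l
  have hsn := aux_summable_norm_int μ X hXm hint l
  have hieq : ∀ k : ℕ, (∫ ω, (l * X ω) ^ k / k.factorial ∂μ)
      = (∫ ω, X ω ^ k ∂μ) / k.factorial * l ^ k := by
    intro k
    have : (fun ω => (l * X ω) ^ k / (k.factorial : ℝ))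
        = fun ω => (l ^ k / k.factorial) * X ω ^ k := by
      funext ω; rw [mul_pow]; ring
    rw [this, integral_const_mul]; ring
  have ht : ∑' k : ℕ, (∫ ω, (l * X ω) ^ k / k.factorial ∂μ)
      = ∫ ω, Real.exp (l * X ω) ∂μ := by
    rw [integral_tsum_of_summable_integral_norm hGint hsn]
    congr 1
    funext ω
    have := congrFun (NormedSpace.exp_eq_tsum_div (𝔸 := ℝ)) (l * X ω)
    rw [Real.exp_eq_exp_ℝ, this]
  have hs2 : Summable (fun k : ℕ => ∫ ω, (l * X ω) ^ k / k.factorial ∂μ) :=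
    Summable.of_norm_bounded hsn (fun k => norm_integral_le_integral_norm _)
  have := ht ▸ hs2.hasSum
  exact HasSum.congr_fun this fun k => (hieq k).symm

/-- If a random variable `X` has moment generating function `λ ↦ E_β(λ²a/2)`, then its
odd moments vanish and its even moments are `∫ X^{2n} = (2n)!/(2^n Γ(βn+1)) · a^n`. -/
theorem moments_of_mittagLeffler_mgf {Ω : Type*} [MeasurableSpace Ω]
    (μ : Measure Ω) [IsProbabilityMeasure μ] (β : ℝ) (hβ : 0 < β) (hβ1 : β ≤ 1)
    (a : ℝ) (ha : 0 ≤ a) (X : Ω → ℝ)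
    (hint : ∀ l : ℝ, Integrable (fun ω => Real.exp (l * X ω)) μ)
    (hmgf : ∀ l : ℝ, ∫ ω, Real.exp (l * X ω) ∂μ = mittagLefflerReal β (l ^ 2 * a / 2)) :
    ∀ n : ℕ,
      (Integrable (fun ω => X ω ^ (2 * n + 1)) μ ∧ ∫ ω, X ω ^ (2 * n + 1) ∂μ = 0) ∧
      (Integrable (fun ω => X ω ^ (2 * n)) μ ∧
        ∫ ω, X ω ^ (2 * n) ∂μ =
          (2 * n).factorial / (2 ^ n * Real.Gamma (β * n + 1)) * a ^ n) := by
  have hXm : AEMeasurable X μ := by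
    have h1 : AEMeasurable (fun ω => Real.exp (1 * X ω)) μ := (hint 1).aemeasurable
    have h2 : AEMeasurable (fun ω => Real.log (Real.exp (1 * X ω))) μ :=
      Real.measurable_log.comp_aemeasurable h1
    simpa [Real.log_exp] using h2
  have hGpos : ∀ n : ℕ, 0 < Real.Gamma (β * n + 1) := fun n =>
    Real.Gamma_pos_of_pos (by positivity)
  -- integrability of all powers
  have hpowint : ∀ k : ℕ, Integrable (fun ω => X ω ^ k) μ := by
    intro k
    have h := (aux_int_pow μ X hXm hint 1 k).const_mul (k.factorial : ℝ)
    refine h.congr ?_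
    filter_upwards with ω
    rw [one_mul]
    field_simp
  -- coefficients
  set c : ℕ → ℝ := fun k => (∫ ω, X ω ^ k ∂μ) / k.factorial with hc_def
  set d : ℕ → ℝ := fun k =>
    if Even k then (a / 2) ^ (k / 2) / Real.Gamma (β * (k / 2 : ℕ) + 1) else 0 with hd_def
  have hB : ∀ l : ℝ, HasSum (fun k : ℕ => c k * l ^ k) (∫ ω, Real.exp (l * X ω) ∂μ) :=
    fun l => aux_hasSum_mgf μ X hXm hint l
  -- summability of the Mittag-Leffler series at attained points
  have hC : ∀ l : ℝ, Summable (fun n : ℕ => (l ^ 2 * a / 2) ^ n / Real.Gamma (β * n + 1)) := by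
    intro l
    by_contra h
    have h0 := hmgf l
    rw [mittagLefflerReal, tsum_eq_zero_of_not_summable h] at h0
    exact absurd h0 (ne_of_gt (integral_exp_pos (hint l)))
  -- HasSum for the d-coefficients
  have hD : ∀ l : ℝ, HasSum (fun k : ℕ => d k * l ^ k)
      (mittagLefflerReal β (l ^ 2 * a / 2)) := by
    intro l
    have hinj : Function.Injective (fun n : ℕ => 2 * n) := fun m n h => by simp only at h; omega
    have h0 : ∀ x ∉ Set.range (fun n : ℕ => 2 * n), d x * l ^ x = 0 := by
      intro x hx
      have hodd : ¬ Even x := by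
        simp only [Set.mem_range, not_exists] at hx
        rintro ⟨r, hr⟩
        exact hx r (by omega)
      simp [hd_def, hodd]
    have hkey : HasSum ((fun k : ℕ => d k * l ^ k) ∘ (fun n : ℕ => 2 * n))
        (mittagLefflerReal β (l ^ 2 * a / 2)) := by
      have hs := (hC l).hasSum
      rw [mittagLefflerReal]
      refine HasSum.congr_fun hs fun n => ?_
      have h2 : (2 * n) / 2 = n := by omega
      simp only [Function.comp_apply, hd_def, h2]
      rw [if_pos ⟨n, by omega⟩]
      rw [pow_mul]
      have : (l ^ 2 * a / 2) = l ^ 2 * (a / 2) := by ring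
      rw [this, mul_pow]
      field_simp
    exact (hinj.hasSum_iff h0).mp hkey
  -- power series
  set p := FormalMultilinearSeries.ofScalars ℝ c with hp_def
  set q := FormalMultilinearSeries.ofScalars ℝ d with hq_def
  set f : ℝ → ℝ := fun l => ∫ ω, Real.exp (l * X ω) ∂μ with hf_def
  have hsump : Summable (fun k : ℕ => ‖p k‖ * (1 : ℝ) ^ k) := by
    simp only [FormalMultilinearSeries.ofScalars_norm, one_pow, mul_one, hp_def]
    refine ((hB 1).summable.abs.congr fun k => ?_)
    rw [one_pow, mul_one, Real.norm_eq_abs]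
  have hsumq : Summable (fun k : ℕ => ‖q k‖ * (1 : ℝ) ^ k) := by
    simp only [FormalMultilinearSeries.ofScalars_norm, one_pow, mul_one, hq_def]
    refine ((hD 1).summable.abs.congr fun k => ?_)
    rw [one_pow, mul_one, Real.norm_eq_abs]
  have hpr : (1 : ENNReal) ≤ p.radius := by
    simpa using p.le_radius_of_summable (r := 1) (by simpa using hsump)
  have hqr : (1 : ENNReal) ≤ q.radius := by
    simpa using q.le_radius_of_summable (r := 1) (by simpa using hsumq)
  have hpf : HasFPowerSeriesAt f p 0 := by
    refine ⟨1, ⟨hpr, one_pos, fun {y} _ => ?_⟩⟩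
    have := hB y
    simp only [zero_add, hf_def]
    refine HasSum.congr_fun this fun k => ?_
    rw [FormalMultilinearSeries.ofScalars_apply_eq, smul_eq_mul]
  have hqf : HasFPowerSeriesAt f q 0 := by
    refine ⟨1, ⟨hqr, one_pos, fun {y} _ => ?_⟩⟩
    have := hD y
    simp only [zero_add, hf_def, hmgf y]
    refine HasSum.congr_fun this fun k => ?_
    rw [FormalMultilinearSeries.ofScalars_apply_eq, smul_eq_mul]
  have hpq : p = q := hpf.eq_formalMultilinearSeries hqf
  have hcd : c = d := by
    rwa [hp_def, hq_def, FormalMultilinearSeries.ofScalars_series_eq_iff] at hpq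
  -- extract the moments
  intro n
  refine ⟨⟨hpowint _, ?_⟩, ⟨hpowint _, ?_⟩⟩
  · have h1 : c (2 * n + 1) = d (2 * n + 1) := congrFun hcd _
    have hodd : ¬ Even (2 * n + 1) := by simp [Nat.even_add_one, parity_simps]
    rw [hd_def] at h1
    simp only [hodd, if_false] at h1
    rw [hc_def] at h1
    have hfac : ((2 * n + 1).factorial : ℝ) ≠ 0 := Nat.cast_ne_zero.mpr (Nat.factorial_ne_zero _)
    field_simp at h1
    simpa using h1
  · have h1 : c (2 * n) = d (2 * n) := congrFun hcd _
    have h2 : (2 * n) / 2 = n := by omega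
    rw [hd_def] at h1
    simp only [h2] at h1
    rw [if_pos ⟨n, by omega⟩, hc_def] at h1
    have hfac : (((2 * n).factorial : ℝ)) ≠ 0 := Nat.cast_ne_zero.mpr (Nat.factorial_ne_zero _)
    have hG := (hGpos n).ne'
    rw [div_eq_iff hfac] at h1
    rw [h1, div_pow]
    field_simp
end

section
/- Let 0 < β ≤ 1, let a, b ≥ 0 and c ∈ ℝ, let (Ω, 𝓕, μ) be a probability space and X, Y : Ω → ℝ random variables such that for all u, v ∈ ℝ the function exp(uX + vY) is integrable and ∫_Ω e^{uX+vY} dμ = E_β((1/2)(u²a + 2uvc + v²b)). Then X and Y are square integrable, ∫_Ω X dμ = ∫_Ω Y dμ = 0, and ∫_Ω X·Y dμ = c / Γ(β+1). -/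
open MeasureTheory

open Filter Real Topology

private lemma two_pow_le_fact (m : ℕ) : 2 ^ m ≤ (m + 1).factorial := by
  induction m with
  | zero => simp
  | succ k ih =>
    rw [pow_succ, Nat.factorial_succ]
    calc 2 ^ k * 2 ≤ (k + 1).factorial * 2 := by omega
    _ ≤ (k + 2) * (k + 1).factorial := by ring_nf; omega

private lemma gamma_ge_two_rpow {y : ℝ} (hy : 3 ≤ y) :
    (2 : ℝ) ^ (y - 3) ≤ Real.Gamma y := by
  set k := ⌊y⌋₊ with hk
  have hy0 : (0:ℝ) ≤ y := by linarith
  have hk3 : 3 ≤ k := Nat.le_floor (by exact_mod_cast hy)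
  have hky : (k : ℝ) ≤ y := Nat.floor_le hy0
  have hyk : y < k + 1 := Nat.lt_floor_add_one y
  have h1 : (2:ℝ) ^ (y - 3) ≤ (2:ℝ) ^ (((k - 2 : ℕ) : ℝ)) := by
    apply Real.rpow_le_rpow_of_exponent_le one_le_two
    have : ((k - 2 : ℕ) : ℝ) = (k : ℝ) - 2 := by
      have : (2:ℕ) ≤ k := by omega
      push_cast [Nat.cast_sub this]; ring
    rw [this]; linarith
  have h2 : (2:ℝ) ^ (((k - 2 : ℕ) : ℝ)) = ((2 ^ (k - 2) : ℕ) : ℝ) := by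
    rw [Real.rpow_natCast]; push_cast; ring
  have h3 : ((2 ^ (k - 2) : ℕ) : ℝ) ≤ ((k - 1).factorial : ℕ) := by
    exact_mod_cast Nat.cast_le.mpr (by
      have := two_pow_le_fact (k - 2)
      have hk2 : k - 2 + 1 = k - 1 := by omega
      rwa [hk2] at this)
  have h4 : ((k - 1).factorial : ℝ) = Real.Gamma (k : ℝ) := by
    have : (k : ℝ) = ((k - 1 : ℕ) : ℝ) + 1 := by
      have : (1:ℕ) ≤ k := by omega
      push_cast [Nat.cast_sub this]; ring
    rw [this, Real.Gamma_nat_eq_factorial]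
  have h5 : Real.Gamma (k : ℝ) ≤ Real.Gamma y := by
    rcases eq_or_lt_of_le hky with h | h
    · rw [h]
    · have hk2 : (2:ℝ) ≤ (k:ℝ) := by exact_mod_cast by omega
      exact le_of_lt (Real.Gamma_strictMonoOn_Ici hk2 (by simp only [Set.mem_Ici]; linarith) h)
  calc (2:ℝ) ^ (y - 3) ≤ ((2 ^ (k - 2) : ℕ) : ℝ) := h1.trans_eq h2
  _ ≤ ((k - 1).factorial : ℝ) := h3
  _ = Real.Gamma (k : ℝ) := h4
  _ ≤ Real.Gamma y := h5

private lemma summable_ml {β : ℝ} (hβ : 0 < β) {ρ : ℝ} (hρ : 0 < ρ) {x : ℝ}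
    (hx : |x| ≤ 1) : Summable (fun n : ℕ => x ^ n / Real.Gamma (β * n + ρ)) := by
  apply Summable.of_abs
  set N := ⌈3 / β⌉₊ with hN
  rw [← _root_.summable_nat_add_iff N]
  have hbN : 3 ≤ β * N := by
    have h1 : 3 / β ≤ (N : ℝ) := Nat.le_ceil _
    calc (3:ℝ) = β * (3 / β) := by field_simp
    _ ≤ β * N := by nlinarith
  have hgeo : Summable (fun n : ℕ => (2:ℝ) ^ ((3:ℝ) - ρ - β * N) * ((2:ℝ) ^ (-β)) ^ n) := by
    apply Summable.mul_left
    exact summable_geometric_of_lt_one (le_of_lt (Real.rpow_pos_of_pos two_pos _))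
      (Real.rpow_lt_one_of_one_lt_of_neg one_lt_two (by linarith))
  apply Summable.of_nonneg_of_le (fun n => abs_nonneg _) _ hgeo
  intro n
  have hy : (3:ℝ) ≤ β * (n + N) + ρ := by
    have : (0:ℝ) ≤ β * n := by positivity
    push_cast; nlinarith
  have hΓ : (2:ℝ) ^ ((β * (n + N) + ρ) - 3) ≤ Real.Gamma (β * (n + N) + ρ) :=
    gamma_ge_two_rpow hy
  have hΓpos : (0:ℝ) < Real.Gamma (β * (n + N) + ρ) := by
    apply lt_of_lt_of_le _ hΓ
    positivity
  have h1 : |x ^ (n + N) / Real.Gamma (β * ↑(n + N) + ρ)| ≤ 1 / Real.Gamma (β * (n + N) + ρ) := by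
    push_cast
    rw [abs_div, abs_of_pos hΓpos]
    gcongr
    rw [abs_pow]
    exact pow_le_one₀ (abs_nonneg x) hx
  have h2 : 1 / Real.Gamma (β * (n + N) + ρ)
      ≤ (2:ℝ) ^ ((3:ℝ) - ρ - β * N) * ((2:ℝ) ^ (-β)) ^ n := by
    have hpow : ((2:ℝ) ^ (-β)) ^ n = (2:ℝ) ^ (-β * (n:ℝ)) := by
      rw [← Real.rpow_natCast ((2:ℝ) ^ (-β)) n, ← Real.rpow_mul (by norm_num : (0:ℝ) ≤ 2)]
    rw [hpow, ← Real.rpow_add two_pos]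
    calc 1 / Real.Gamma (β * (n + N) + ρ)
        ≤ 1 / (2:ℝ) ^ ((β * (n + N) + ρ) - 3) := by
          apply one_div_le_one_div_of_le (by positivity) hΓ
    _ = (2:ℝ) ^ (-((β * (n + N) + ρ) - 3)) := by
          rw [Real.rpow_neg (by norm_num : (0:ℝ) ≤ 2), one_div]
    _ = (2:ℝ) ^ ((3:ℝ) - ρ - β * N + -β * (n:ℝ)) := by
          congr 1; push_cast; ring
  exact h1.trans h2

private lemma tsum_abs_le {β ρ : ℝ} (hβ : 0 < β) (hρ : 0 < ρ) (h : ℕ → ℝ) (M : ℝ)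
    (hb : ∀ n, |h n| ≤ M * (1 / Real.Gamma (β * n + ρ))) :
    |∑' n, h n| ≤ M * ∑' n : ℕ, 1 / Real.Gamma (β * n + ρ) := by
  have hC : Summable (fun n : ℕ => 1 / Real.Gamma (β * n + ρ)) := by
    simpa using summable_ml hβ hρ (x := (1:ℝ)) (by norm_num)
  have h1 : Summable fun n => |h n| :=
    Summable.of_nonneg_of_le (fun n => abs_nonneg _) hb (hC.mul_left M)
  calc |∑' n, h n| ≤ ∑' n, |h n| := by
        simpa [Real.norm_eq_abs] using
          norm_tsum_le_tsum_norm (f := h) (by simpa [Real.norm_eq_abs] using h1)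
  _ ≤ ∑' n : ℕ, M * (1 / Real.Gamma (β * n + ρ)) := Summable.tsum_le_tsum hb h1 (hC.mul_left M)
  _ = M * ∑' n : ℕ, 1 / Real.Gamma (β * n + ρ) := tsum_mul_left

private lemma ml_bound1 {β : ℝ} (hβ : 0 < β) {s : ℝ} (hs : |s| ≤ 1) :
    |mittagLefflerReal β s - 1| ≤ |s| * ∑' k : ℕ, 1 / Real.Gamma (β * k + (β + 1)) := by
  have hsum : Summable (fun n : ℕ => s ^ n / Real.Gamma (β * n + 1)) :=
    summable_ml hβ one_pos hs
  rw [mittagLefflerReal, Summable.tsum_eq_zero_add hsum]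
  have h0 : s ^ (0:ℕ) / Real.Gamma (β * (0:ℕ) + 1) = 1 := by
    simp [Real.Gamma_one]
  rw [h0, add_sub_cancel_left]
  apply tsum_abs_le hβ (by linarith)
  intro n
  have harg : β * ((n + 1 : ℕ) : ℝ) + 1 = β * n + (β + 1) := by push_cast; ring
  rw [harg, abs_div]
  have hΓ : 0 < Real.Gamma (β * n + (β + 1)) := Real.Gamma_pos_of_pos (by positivity)
  rw [abs_of_pos hΓ, mul_one_div]
  apply (div_le_div_iff_of_pos_right hΓ).mpr
  calc |s ^ (n + 1)| = |s| ^ n * |s| := by rw [abs_pow, pow_succ]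
  _ ≤ 1 * |s| := by gcongr; exact pow_le_one₀ (abs_nonneg s) hs
  _ = |s| := one_mul _

private lemma ml_bound2 {β : ℝ} (hβ : 0 < β) {s : ℝ} (hs : |s| ≤ 1) :
    |mittagLefflerReal β s - 1 - s / Real.Gamma (β + 1)|
      ≤ s ^ 2 * ∑' k : ℕ, 1 / Real.Gamma (β * k + (2 * β + 1)) := by
  have hsum : Summable (fun n : ℕ => s ^ n / Real.Gamma (β * n + 1)) :=
    summable_ml hβ one_pos hs
  rw [mittagLefflerReal, Summable.tsum_eq_zero_add hsum]
  have h2 : Summable (fun n : ℕ => s ^ (n + 1) / Real.Gamma (β * ((n + 1 : ℕ) : ℝ) + 1)) :=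
    (_root_.summable_nat_add_iff 1).mpr hsum
  rw [Summable.tsum_eq_zero_add h2]
  have h0 : s ^ (0:ℕ) / Real.Gamma (β * (0:ℕ) + 1) = 1 := by simp [Real.Gamma_one]
  have h1 : s ^ (0 + 1) / Real.Gamma (β * ((0 + 1 : ℕ) : ℝ) + 1) = s / Real.Gamma (β + 1) := by
    norm_num
  rw [h0, h1]
  have hclean : (1 + (s / Real.Gamma (β + 1) +
      ∑' n : ℕ, s ^ (n + 1 + 1) / Real.Gamma (β * ((n + 1 + 1 : ℕ) : ℝ) + 1)))
      - 1 - s / Real.Gamma (β + 1)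
      = ∑' n : ℕ, s ^ (n + 1 + 1) / Real.Gamma (β * ((n + 1 + 1 : ℕ) : ℝ) + 1) := by ring
  rw [hclean]
  apply tsum_abs_le hβ (by linarith)
  intro n
  have harg : β * ((n + 1 + 1 : ℕ) : ℝ) + 1 = β * n + (2 * β + 1) := by push_cast; ring
  rw [harg, abs_div]
  have hΓ : 0 < Real.Gamma (β * n + (2 * β + 1)) := Real.Gamma_pos_of_pos (by positivity)
  rw [abs_of_pos hΓ, mul_one_div]
  apply (div_le_div_iff_of_pos_right hΓ).mpr
  calc |s ^ (n + 1 + 1)| = |s| ^ n * |s| ^ 2 := by rw [abs_pow, ← pow_add]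
  _ ≤ 1 * |s| ^ 2 := by gcongr; exact pow_le_one₀ (abs_nonneg s) hs
  _ = s ^ 2 := by rw [one_mul, sq_abs]

private lemma abs_exp_sub_one_le' (u : ℝ) : |Real.exp u - 1| ≤ |u| * Real.exp |u| := by
  rcases le_or_gt 0 u with hu | hu
  · rw [abs_of_nonneg hu, abs_of_nonneg (by linarith [Real.one_le_exp hu] : (0:ℝ) ≤ Real.exp u - 1)]
    have h1 : 1 - u ≤ Real.exp (-u) := by linarith [Real.add_one_le_exp (-u)]
    have h2 : Real.exp (-u) * Real.exp u = 1 := by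
      rw [← Real.exp_add]; simp
    nlinarith [Real.exp_pos u]
  · rw [abs_of_neg hu, abs_of_nonpos (by linarith [Real.exp_lt_one_iff.mpr hu] : Real.exp u - 1 ≤ 0)]
    have h1 : 1 + u ≤ Real.exp u := by linarith [Real.add_one_le_exp u]
    nlinarith [Real.one_le_exp (le_of_lt (neg_pos.mpr hu))]

private lemma sq_le_four_mul_exp_abs (z : ℝ) : z ^ 2 ≤ 4 * Real.exp |z| := by
  have h1 : 1 + |z| / 2 ≤ Real.exp (|z| / 2) := by linarith [Real.add_one_le_exp (|z|/2)]
  have h2 : Real.exp (|z| / 2) ^ 2 = Real.exp |z| := by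
    rw [← Real.exp_nat_mul]; congr 1; push_cast; ring
  have h3 : (1 + |z| / 2) ^ 2 ≤ Real.exp |z| := by
    rw [← h2]
    apply pow_le_pow_left₀ (by positivity) h1
  have h4 : z ^ 2 = |z| ^ 2 := (sq_abs z).symm
  nlinarith [abs_nonneg z]

private lemma exp_abs_le_sum (x : ℝ) : Real.exp |x| ≤ Real.exp x + Real.exp (-x) := by
  rcases abs_cases x with ⟨h, _⟩ | ⟨h, _⟩ <;> rw [h] <;>
    [linarith [Real.exp_pos (-x)]; linarith [Real.exp_pos x]]

private lemma abs_le_exp_abs (z : ℝ) : |z| ≤ Real.exp |z| := by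
  linarith [Real.add_one_le_exp |z|, abs_nonneg z]

open Filter Topology in
private lemma slope_tendsto (z : ℝ) {t : ℕ → ℝ} (ht0 : ∀ n, t n ≠ 0)
    (htt : Tendsto t atTop (𝓝 0)) :
    Tendsto (fun n => (Real.exp (t n * z) - 1) / t n) atTop (𝓝 z) := by
  have hd : HasDerivAt (fun s : ℝ => Real.exp (s * z)) z 0 := by
    simpa using (hasDerivAt_mul_const (x := (0:ℝ)) z).exp
  have hs := hasDerivAt_iff_tendsto_slope.mp hd
  have htn : Tendsto t atTop (𝓝[≠] 0) :=
    tendsto_nhdsWithin_of_tendsto_nhds_of_eventually_within _ htt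
      (Eventually.of_forall fun n => ht0 n)
  refine (hs.comp htn).congr fun n => ?_
  simp [slope_def_field, Function.comp]

private lemma pointwise_A {z t : ℝ} (h0 : 0 < t) (h1 : t ≤ 1) :
    |(Real.exp (t * z) - 1) / t| ≤ |z| * Real.exp |z| := by
  have h2 := abs_exp_sub_one_le' (t * z)
  have habs : |t * z| = t * |z| := by rw [abs_mul, abs_of_pos h0]
  rw [habs] at h2
  rw [abs_div, abs_of_pos h0]
  calc |Real.exp (t * z) - 1| / t ≤ (t * |z| * Real.exp (t * |z|)) / t :=
        (div_le_div_iff_of_pos_right h0).mpr h2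
  _ = |z| * Real.exp (t * |z|) := by field_simp
  _ ≤ |z| * Real.exp |z| := by
        gcongr
        nlinarith [abs_nonneg z]

private lemma pointwise_B {z t : ℝ} (h0 : 0 < t) (h1 : t ≤ 1) :
    |(1 - Real.exp (-(t * z))) / t| ≤ |z| * Real.exp |z| := by
  have := pointwise_A (z := -z) h0 h1
  rw [abs_neg] at this
  calc |(1 - Real.exp (-(t * z))) / t| = |(Real.exp (t * -z) - 1) / t| := by
        rw [abs_div, abs_div, abs_sub_comm]
        congr 3
        ring_nf
  _ ≤ |z| * Real.exp |z| := this

private lemma pointwise_1 {z t : ℝ} (h0 : 0 < t) (h1 : t ≤ 1) :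
    |(Real.exp (t * z) - 1) / t| ≤ Real.exp (2 * z) + Real.exp (-(2 * z)) := by
  calc |(Real.exp (t * z) - 1) / t| ≤ |z| * Real.exp |z| := pointwise_A h0 h1
  _ ≤ Real.exp |z| * Real.exp |z| := by gcongr; exact abs_le_exp_abs z
  _ = Real.exp |2 * z| := by rw [← Real.exp_add, abs_mul, abs_two]; ring_nf
  _ ≤ Real.exp (2 * z) + Real.exp (-(2 * z)) := exp_abs_le_sum _

private lemma pointwise_2 {z t : ℝ} (h0 : 0 < t) (h1 : t ≤ 1) :
    |((Real.exp (t * z) - 1) / t) * ((1 - Real.exp (-(t * z))) / t)|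
      ≤ 4 * (Real.exp (4 * z) + Real.exp (-(4 * z))) := by
  rw [abs_mul]
  have hA := pointwise_A (z := z) h0 h1
  have hB := pointwise_B (z := z) h0 h1
  have hz : (0:ℝ) ≤ |z| * Real.exp |z| := by positivity
  calc |(Real.exp (t * z) - 1) / t| * |(1 - Real.exp (-(t * z))) / t|
      ≤ (|z| * Real.exp |z|) * (|z| * Real.exp |z|) :=
        mul_le_mul hA hB (abs_nonneg _) hz
  _ = z ^ 2 * (Real.exp |z| * Real.exp |z|) := by rw [← sq_abs]; ring
  _ ≤ (4 * Real.exp |z|) * (Real.exp |z| * Real.exp |z|) := by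
        gcongr
        exact sq_le_four_mul_exp_abs z
  _ = 4 * Real.exp (|z| + (|z| + |z|)) := by rw [Real.exp_add, Real.exp_add]; ring
  _ ≤ 4 * Real.exp |4 * z| := by
        gcongr
        rw [abs_mul, abs_of_nonneg (by norm_num : (0:ℝ) ≤ 4)]
        nlinarith [abs_nonneg z]
  _ ≤ 4 * (Real.exp (4 * z) + Real.exp (-(4 * z))) := by
        gcongr
        exact exp_abs_le_sum _

private lemma expand_id {x t : ℝ} (ht : t ≠ 0) :
    ((Real.exp x - 1) / t) * ((1 - Real.exp (-x)) / t)
      = (Real.exp x + Real.exp (-x) - 2) / t ^ 2 := by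
  rw [Real.exp_neg]
  have h := Real.exp_ne_zero x
  field_simp
  ring

open Filter Topology in
private lemma key {Ω : Type*} [MeasurableSpace Ω] (μ : Measure Ω) [IsProbabilityMeasure μ]
    {β : ℝ} (hβ : 0 < β) (q : ℝ) (Z : Ω → ℝ)
    (hZ : ∀ t : ℝ, Integrable (fun ω => Real.exp (t * Z ω)) μ)
    (h : ∀ t : ℝ, ∫ ω, Real.exp (t * Z ω) ∂μ = mittagLefflerReal β (t ^ 2 * q / 2)) :
    Integrable Z μ ∧ Integrable (fun ω => Z ω ^ 2) μ ∧
      (∫ ω, Z ω ∂μ) = 0 ∧ (∫ ω, Z ω ^ 2 ∂μ) = q / Real.Gamma (β + 1) := by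
  -- measurability
  have hZm : AEStronglyMeasurable Z μ := by
    obtain ⟨g, hg, hfg⟩ :=
      (show Integrable (fun ω => Real.exp (Z ω)) μ by simpa using hZ 1).aestronglyMeasurable
    refine ⟨fun ω => Real.log (g ω),
      (Real.measurable_log.comp hg.measurable).stronglyMeasurable, ?_⟩
    filter_upwards [hfg] with ω hω
    rw [← hω, Real.log_exp]
  have hZ2m : AEStronglyMeasurable (fun ω => Z ω ^ 2) μ :=
    (hZm.aemeasurable.pow_const 2).aestronglyMeasurable
  -- bound functions
  have hB1 : Integrable (fun ω => Real.exp (2 * Z ω) + Real.exp (-(2 * Z ω))) μ :=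
    (hZ 2).add (by simpa [neg_mul] using hZ (-2))
  have hB2 : Integrable (fun ω => 4 * (Real.exp (4 * Z ω) + Real.exp (-(4 * Z ω)))) μ :=
    ((hZ 4).add (by simpa [neg_mul] using hZ (-4))).const_mul 4
  -- integrability of Z and Z^2
  have hZint : Integrable Z μ := by
    apply Integrable.mono' hB1 hZm
    filter_upwards with ω
    calc ‖Z ω‖ = |Z ω| := rfl
    _ ≤ Real.exp |Z ω| := abs_le_exp_abs _
    _ ≤ Real.exp |2 * Z ω| := by
        apply Real.exp_le_exp.mpr
        rw [abs_mul, abs_two]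
        nlinarith [abs_nonneg (Z ω)]
    _ ≤ Real.exp (2 * Z ω) + Real.exp (-(2 * Z ω)) := exp_abs_le_sum _
  have hZ2int : Integrable (fun ω => Z ω ^ 2) μ := by
    apply Integrable.mono' hB2 hZ2m
    filter_upwards with ω
    calc ‖Z ω ^ 2‖ = Z ω ^ 2 := by rw [Real.norm_eq_abs, abs_of_nonneg (sq_nonneg _)]
    _ ≤ 4 * Real.exp |Z ω| := sq_le_four_mul_exp_abs _
    _ ≤ 4 * Real.exp |4 * Z ω| := by
        apply mul_le_mul_of_nonneg_left _ (by norm_num : (0:ℝ) ≤ 4)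
        apply Real.exp_le_exp.mpr
        rw [abs_mul, abs_of_nonneg (by norm_num : (0:ℝ) ≤ 4)]
        nlinarith [abs_nonneg (Z ω)]
    _ ≤ 4 * (Real.exp (4 * Z ω) + Real.exp (-(4 * Z ω))) := by
        gcongr
        exact exp_abs_le_sum _
  -- the scale T and the sequence t
  set T : ℝ := min 1 (1 + |q|)⁻¹ with hTdef
  have h1q : (0:ℝ) < 1 + |q| := by positivity
  have hT0 : 0 < T := lt_min one_pos (by positivity)
  have hT1 : T ≤ 1 := min_le_left _ _
  have hTq : T ^ 2 * |q| / 2 ≤ 1 := by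
    have h' : T ≤ (1 + |q|)⁻¹ := min_le_right _ _
    have hmul : T * (1 + |q|) ≤ 1 := by
      calc T * (1 + |q|) ≤ (1 + |q|)⁻¹ * (1 + |q|) := by gcongr
      _ = 1 := inv_mul_cancel₀ h1q.ne'
    have h2 : T ^ 2 * (1 + |q|) ^ 2 ≤ 1 := by
      calc T ^ 2 * (1 + |q|) ^ 2 = (T * (1 + |q|)) ^ 2 := by ring
      _ ≤ 1 := pow_le_one₀ (by positivity) hmul
    have h3 : |q| ≤ (1 + |q|) ^ 2 := by nlinarith [abs_nonneg q]
    nlinarith [mul_le_mul_of_nonneg_left h3 (sq_nonneg T)]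
  set t : ℕ → ℝ := fun n => T / (n + 1) with htdef
  have ht0 : ∀ n, 0 < t n := fun n => div_pos hT0 (by positivity)
  have htne : ∀ n, t n ≠ 0 := fun n => (ht0 n).ne'
  have ht1 : ∀ n, t n ≤ T := fun n =>
    div_le_self hT0.le (by push_cast; linarith [Nat.cast_nonneg (α := ℝ) n])
  have htT1 : ∀ n, t n ≤ 1 := fun n => (ht1 n).trans hT1
  have htt : Tendsto t atTop (𝓝 0) := by
    have h1 : Tendsto (fun n : ℕ => T * (1 / ((n : ℝ) + 1))) atTop (𝓝 (T * 0)) :=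
      tendsto_one_div_add_atTop_nhds_zero_nat.const_mul T
    simpa [htdef, mul_one_div, div_eq_mul_inv] using h1
  have hs1 : ∀ n, |t n ^ 2 * q / 2| ≤ 1 := by
    intro n
    have : |t n ^ 2 * q / 2| = t n ^ 2 * |q| / 2 := by
      rw [abs_div, abs_mul, abs_of_nonneg (sq_nonneg _), abs_two]
    rw [this]
    calc t n ^ 2 * |q| / 2 ≤ T ^ 2 * |q| / 2 := by
          gcongr
          exact ht1 n
    _ ≤ 1 := hTq
  -- first moment
  have hΓpos : 0 < Real.Gamma (β + 1) := Real.Gamma_pos_of_pos (by linarith)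
  have hF_meas : ∀ n, AEStronglyMeasurable (fun ω => (Real.exp (t n * Z ω) - 1) / t n) μ :=
    fun n => (((hZ (t n)).sub (integrable_const 1)).div_const (t n)).aestronglyMeasurable
  have hF_bound : ∀ n, ∀ᵐ ω ∂μ, ‖(Real.exp (t n * Z ω) - 1) / t n‖
      ≤ Real.exp (2 * Z ω) + Real.exp (-(2 * Z ω)) :=
    fun n => Eventually.of_forall fun ω => pointwise_1 (ht0 n) (htT1 n)
  have hF_lim : ∀ᵐ ω ∂μ, Tendsto (fun n => (Real.exp (t n * Z ω) - 1) / t n) atTop (𝓝 (Z ω)) :=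
    Eventually.of_forall fun ω => slope_tendsto (Z ω) htne htt
  have hF_tend := tendsto_integral_of_dominated_convergence _ hF_meas hB1 hF_bound hF_lim
  have hval : ∀ n, (∫ ω, (Real.exp (t n * Z ω) - 1) / t n ∂μ)
      = (mittagLefflerReal β (t n ^ 2 * q / 2) - 1) / t n := by
    intro n
    rw [integral_div, integral_sub (hZ (t n)) (integrable_const 1), h (t n)]
    simp [measure_univ]
  have habsq : ∀ n, |t n ^ 2 * q / 2| = t n ^ 2 * |q| / 2 := by
    intro n
    rw [abs_div, abs_mul, abs_of_nonneg (sq_nonneg _), abs_two]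
  have hC1nn : (0:ℝ) ≤ ∑' k : ℕ, 1 / Real.Gamma (β * k + (β + 1)) :=
    tsum_nonneg fun k => by positivity
  have hlim0 : Tendsto (fun n => (mittagLefflerReal β (t n ^ 2 * q / 2) - 1) / t n)
      atTop (𝓝 0) := by
    apply squeeze_zero_norm
      (a := fun n => (|q| / 2 * (∑' k : ℕ, 1 / Real.Gamma (β * k + (β + 1)))) * t n)
    · intro n
      have hb := ml_bound1 hβ (hs1 n)
      rw [Real.norm_eq_abs, abs_div, abs_of_pos (ht0 n)]
      calc |mittagLefflerReal β (t n ^ 2 * q / 2) - 1| / t n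
          ≤ (|t n ^ 2 * q / 2| * ∑' k : ℕ, 1 / Real.Gamma (β * k + (β + 1))) / t n :=
            (div_le_div_iff_of_pos_right (ht0 n)).mpr hb
      _ = (|q| / 2 * (∑' k : ℕ, 1 / Real.Gamma (β * k + (β + 1)))) * t n := by
            rw [habsq n]
            field_simp
    · simpa using htt.const_mul (|q| / 2 * (∑' k : ℕ, 1 / Real.Gamma (β * k + (β + 1))))
  have hmean : (∫ ω, Z ω ∂μ) = 0 := by
    rw [show (fun n => ∫ ω, (Real.exp (t n * Z ω) - 1) / t n ∂μ)
      = fun n => (mittagLefflerReal β (t n ^ 2 * q / 2) - 1) / t n from funext hval] at hF_tend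
    exact tendsto_nhds_unique hF_tend hlim0
  -- second moment
  have hnegint : ∀ n, Integrable (fun ω => Real.exp (-(t n * Z ω))) μ :=
    fun n => by simpa [neg_mul] using hZ (-(t n))
  have hG_meas : ∀ n, AEStronglyMeasurable
      (fun ω => ((Real.exp (t n * Z ω) - 1) / t n) * ((1 - Real.exp (-(t n * Z ω))) / t n)) μ :=
    fun n => ((((hZ (t n)).sub (integrable_const 1)).div_const (t n)).aestronglyMeasurable).mul
      ((((integrable_const 1).sub (hnegint n)).div_const (t n)).aestronglyMeasurable)
  have hG_bound : ∀ n, ∀ᵐ ω ∂μ,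
      ‖((Real.exp (t n * Z ω) - 1) / t n) * ((1 - Real.exp (-(t n * Z ω))) / t n)‖
        ≤ 4 * (Real.exp (4 * Z ω) + Real.exp (-(4 * Z ω))) :=
    fun n => Eventually.of_forall fun ω => pointwise_2 (ht0 n) (htT1 n)
  have hG_lim : ∀ᵐ ω ∂μ, Tendsto
      (fun n => ((Real.exp (t n * Z ω) - 1) / t n) * ((1 - Real.exp (-(t n * Z ω))) / t n))
      atTop (𝓝 (Z ω ^ 2)) := by
    refine Eventually.of_forall fun ω => ?_
    have hA := slope_tendsto (Z ω) htne htt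
    have hBneg := (slope_tendsto (-(Z ω)) htne htt).neg
    have hB : Tendsto (fun n => (1 - Real.exp (-(t n * Z ω))) / t n) atTop (𝓝 (Z ω)) := by
      refine (by simpa using hBneg : Tendsto
        (fun n => -((Real.exp (t n * -Z ω) - 1) / t n)) atTop (𝓝 (Z ω))).congr fun n => ?_
      rw [mul_neg, ← neg_div, neg_sub]
    have := hA.mul hB
    simpa [sq] using this
  have hG_tend := tendsto_integral_of_dominated_convergence _ hG_meas hB2 hG_bound hG_lim
  have hGval : ∀ n, (∫ ω, ((Real.exp (t n * Z ω) - 1) / t n)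
        * ((1 - Real.exp (-(t n * Z ω))) / t n) ∂μ)
      = (2 * (mittagLefflerReal β (t n ^ 2 * q / 2) - 1)) / t n ^ 2 := by
    intro n
    have hrw : (fun ω => ((Real.exp (t n * Z ω) - 1) / t n)
        * ((1 - Real.exp (-(t n * Z ω))) / t n))
        = fun ω => (Real.exp (t n * Z ω) + Real.exp (-(t n * Z ω)) - 2) / t n ^ 2 :=
      funext fun ω => expand_id (htne n)
    have hexpneg : (∫ ω, Real.exp (-(t n * Z ω)) ∂μ) = mittagLefflerReal β (t n ^ 2 * q / 2) := by
      have := h (-(t n))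
      simpa [neg_mul, neg_sq] using this
    have hadd : Integrable (fun ω => Real.exp (t n * Z ω) + Real.exp (-(t n * Z ω))) μ :=
      (hZ (t n)).add (hnegint n)
    rw [hrw, integral_div, integral_sub hadd (integrable_const 2),
      integral_add (hZ (t n)) (hnegint n), h (t n), hexpneg]
    simp [measure_univ]
    ring
  have hlimq : Tendsto (fun n => (2 * (mittagLefflerReal β (t n ^ 2 * q / 2) - 1)) / t n ^ 2)
      atTop (𝓝 (q / Real.Gamma (β + 1))) := by
    have hdiff : Tendsto (fun n => (2 * (mittagLefflerReal β (t n ^ 2 * q / 2) - 1)) / t n ^ 2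
        - q / Real.Gamma (β + 1)) atTop (𝓝 0) := by
      apply squeeze_zero_norm
        (a := fun n => (q ^ 2 * (∑' k : ℕ, 1 / Real.Gamma (β * k + (2 * β + 1))) / 2) * t n ^ 2)
      · intro n
        have hb := ml_bound2 hβ (hs1 n)
        have hkey : (2 * (mittagLefflerReal β (t n ^ 2 * q / 2) - 1)) / t n ^ 2
            - q / Real.Gamma (β + 1)
            = (2 / t n ^ 2) * (mittagLefflerReal β (t n ^ 2 * q / 2) - 1
              - (t n ^ 2 * q / 2) / Real.Gamma (β + 1)) := by
          have ht2 : t n ^ 2 ≠ 0 := pow_ne_zero 2 (htne n)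
          have ht1' := htne n
          field_simp
        rw [Real.norm_eq_abs, hkey, abs_mul,
          abs_of_pos (by positivity : (0:ℝ) < 2 / t n ^ 2)]
        calc (2 / t n ^ 2) * |mittagLefflerReal β (t n ^ 2 * q / 2) - 1
              - (t n ^ 2 * q / 2) / Real.Gamma (β + 1)|
            ≤ (2 / t n ^ 2) * ((t n ^ 2 * q / 2) ^ 2
              * ∑' k : ℕ, 1 / Real.Gamma (β * k + (2 * β + 1))) := by
              apply mul_le_mul_of_nonneg_left hb (by positivity)
        _ = (q ^ 2 * (∑' k : ℕ, 1 / Real.Gamma (β * k + (2 * β + 1))) / 2) * t n ^ 2 := by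
              have ht2 : t n ^ 2 ≠ 0 := pow_ne_zero 2 (htne n)
              field_simp
      · have h2 : Tendsto (fun n => t n ^ 2) atTop (𝓝 0) := by
          have := htt.mul htt
          simpa [sq] using this
        simpa using h2.const_mul
          (q ^ 2 * (∑' k : ℕ, 1 / Real.Gamma (β * k + (2 * β + 1))) / 2)
    have := hdiff.add_const (q / Real.Gamma (β + 1))
    simpa using this
  have hsecond : (∫ ω, Z ω ^ 2 ∂μ) = q / Real.Gamma (β + 1) := by
    rw [show (fun n => ∫ ω, ((Real.exp (t n * Z ω) - 1) / t n)
        * ((1 - Real.exp (-(t n * Z ω))) / t n) ∂μ)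
      = fun n => (2 * (mittagLefflerReal β (t n ^ 2 * q / 2) - 1)) / t n ^ 2
      from funext hGval] at hG_tend
    exact tendsto_nhds_unique hG_tend hlimq
  exact ⟨hZint, hZ2int, hmean, hsecond⟩

/-- If a pair `(X, Y)` of random variables has joint moment generating function
`(u,v) ↦ E_β((1/2)(u²a + 2uvc + v²b))`, then `X` and `Y` are square integrable,
centered, and `∫ X·Y = c / Γ(β+1)`. -/
theorem covariance_of_mittagLeffler_mgf {Ω : Type*} [MeasurableSpace Ω]
    (μ : Measure Ω) [IsProbabilityMeasure μ] (β : ℝ) (hβ : 0 < β) (hβ1 : β ≤ 1)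
    (a b : ℝ) (ha : 0 ≤ a) (hb : 0 ≤ b) (c : ℝ) (X Y : Ω → ℝ)
    (hint : ∀ u v : ℝ, Integrable (fun ω => Real.exp (u * X ω + v * Y ω)) μ)
    (hmgf : ∀ u v : ℝ, ∫ ω, Real.exp (u * X ω + v * Y ω) ∂μ
      = mittagLefflerReal β ((1 / 2) * (u ^ 2 * a + 2 * u * v * c + v ^ 2 * b))) :
    MemLp X 2 μ ∧ MemLp Y 2 μ ∧
      (∫ ω, X ω ∂μ) = 0 ∧ (∫ ω, Y ω ∂μ) = 0 ∧
      ∫ ω, X ω * Y ω ∂μ = c / Real.Gamma (β + 1) := by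
  have main : ∀ u v : ℝ,
      Integrable (fun ω => u * X ω + v * Y ω) μ ∧
      Integrable (fun ω => (u * X ω + v * Y ω) ^ 2) μ ∧
      (∫ ω, (u * X ω + v * Y ω) ∂μ) = 0 ∧
      (∫ ω, (u * X ω + v * Y ω) ^ 2 ∂μ)
        = (u ^ 2 * a + 2 * u * v * c + v ^ 2 * b) / Real.Gamma (β + 1) := by
    intro u v
    refine key μ hβ (u ^ 2 * a + 2 * u * v * c + v ^ 2 * b) (fun ω => u * X ω + v * Y ω) ?_ ?_
    · intro s
      have h1 : (fun ω => Real.exp (s * (u * X ω + v * Y ω)))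
          = fun ω => Real.exp ((s * u) * X ω + (s * v) * Y ω) := by
        funext ω; congr 1; ring
      rw [h1]; exact hint _ _
    · intro s
      have h1 : (fun ω => Real.exp (s * (u * X ω + v * Y ω)))
          = fun ω => Real.exp ((s * u) * X ω + (s * v) * Y ω) := by
        funext ω; congr 1; ring
      rw [h1, hmgf]
      congr 1
      ring
  have hΓ : Real.Gamma (β + 1) ≠ 0 := (Real.Gamma_pos_of_pos (by linarith)).ne'
  -- measurability of X and Y
  have hXm : AEStronglyMeasurable X μ := by
    obtain ⟨g, hg, hfg⟩ :=
      (show Integrable (fun ω => Real.exp (X ω)) μ by simpa using hint 1 0).aestronglyMeasurable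
    refine ⟨fun ω => Real.log (g ω),
      (Real.measurable_log.comp hg.measurable).stronglyMeasurable, ?_⟩
    filter_upwards [hfg] with ω hω
    rw [← hω, Real.log_exp]
  have hYm : AEStronglyMeasurable Y μ := by
    obtain ⟨g, hg, hfg⟩ :=
      (show Integrable (fun ω => Real.exp (Y ω)) μ by simpa using hint 0 1).aestronglyMeasurable
    refine ⟨fun ω => Real.log (g ω),
      (Real.measurable_log.comp hg.measurable).stronglyMeasurable, ?_⟩
    filter_upwards [hfg] with ω hω
    rw [← hω, Real.log_exp]
  have hX2 : Integrable (fun ω => X ω ^ 2) μ := by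
    have := (main 1 0).2.1
    simpa using this
  have hY2 : Integrable (fun ω => Y ω ^ 2) μ := by
    have := (main 0 1).2.1
    simpa using this
  refine ⟨(memLp_two_iff_integrable_sq hXm).mpr hX2,
    (memLp_two_iff_integrable_sq hYm).mpr hY2, ?_, ?_, ?_⟩
  · have := (main 1 0).2.2.1
    simpa using this
  · have := (main 0 1).2.2.1
    simpa using this
  · have hpp := (main 1 1).2.2.2
    have hpm := (main 1 (-1)).2.2.2
    have hintpp := (main 1 1).2.1
    have hintpm := (main 1 (-1)).2.1
    have hxy : ∀ ω, X ω * Y ω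
        = ((1 * X ω + 1 * Y ω) ^ 2 - (1 * X ω + (-1) * Y ω) ^ 2) / 4 := by
      intro ω; ring
    rw [show (fun ω => X ω * Y ω)
        = fun ω => ((1 * X ω + 1 * Y ω) ^ 2 - (1 * X ω + (-1) * Y ω) ^ 2) / 4
      from funext hxy]
    rw [integral_div, integral_sub hintpp hintpm, hpp, hpm]
    field_simp
    ring
end

section
/- Let 0 < β ≤ 1, d ≥ 1, a_1, …, a_d ≥ 0, and let X_1, …, X_d : Ω → ℝ be mutually independent random variables on a probability space (Ω, 𝓕, μ) such that for every k and every m ∈ ℕ₀ the power X_k^m is integrable with ∫_Ω X_k^{2m+1} dμ = 0 and ∫_Ω X_k^{2m} dμ = (2m)!/(2^m Γ(βm+1)) · a_k^m. Then for every n ∈ ℕ₀, ∫_Ω (X_1 + ⋯ + X_d)^{2n+1} dμ = 0 and ∫_Ω (X_1 + ⋯ + X_d)^{2n} dμ = ((2n)!/2^n) · ∑_{r} a_1^{r_1} ⋯ a_d^{r_d} / (Γ(βr_1+1) ⋯ Γ(βr_d+1)), where the sum runs over all tuples r = (r_1, …, r_d) ∈ ℕ₀^d with r_1 + ⋯ +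 r_d = n (with the convention a_k^0 = 1 even if a_k = 0). -/
open MeasureTheory ProbabilityTheory

lemma aux_prod_indep {Ω : Type*} [MeasurableSpace Ω] (μ : Measure Ω) [IsProbabilityMeasure μ]
    {d : ℕ} (X : Fin d → Ω → ℝ) (hX : ∀ k, Measurable (X k))
    (hindep : iIndepFun X μ)
    (hint : ∀ k m, Integrable (fun ω => X k ω ^ m) μ) (r : Fin d → ℕ) (s : Finset (Fin d)) :
    Integrable (fun ω => ∏ k ∈ s, X k ω ^ r k) μ ∧
      ∫ ω, ∏ k ∈ s, X k ω ^ r k ∂μ = ∏ k ∈ s, ∫ ω, X k ω ^ r k ∂μ := by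
  classical
  induction s using Finset.cons_induction with
  | empty => simp
  | cons i s hi ih =>
    have hg : iIndepFun (fun j ω => X j ω ^ r j) μ :=
      hindep.comp (fun j x => x ^ r j) (fun j => measurable_id.pow_const (r j))
    have hmeas : ∀ j, Measurable (fun ω => X j ω ^ r j) := fun j => (hX j).pow_const (r j)
    have hIndep : IndepFun (fun ω => X i ω ^ r i) (fun ω => ∏ j ∈ s, X j ω ^ r j) μ := by
      have h := (hg.indepFun_finsetProd_of_notMem hmeas hi).symm
      have he : (∏ j ∈ s, fun ω => X j ω ^ r j) = fun ω => ∏ j ∈ s, X j ω ^ r j := by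
        funext ω; simp
      rwa [he] at h
    have h1 : Integrable (fun ω => X i ω ^ r i * ∏ j ∈ s, X j ω ^ r j) μ :=
      hIndep.integrable_mul (hint i (r i)) ih.1
    constructor
    · simp only [Finset.prod_cons]; exact h1
    · have h2 := hIndep.integral_mul_eq_mul_integral (hint i (r i)).aestronglyMeasurable ih.1.aestronglyMeasurable
      simp only [Finset.prod_cons]
      simpa [ih.2] using h2

lemma aux_key {Ω : Type*} [MeasurableSpace Ω] (μ : Measure Ω) [IsProbabilityMeasure μ]
    {d : ℕ} (X : Fin d → Ω → ℝ)
    (haux : ∀ (r : Fin d → ℕ),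
      Integrable (fun ω => ∏ k, X k ω ^ r k) μ ∧
      ∫ ω, ∏ k, X k ω ^ r k ∂μ = ∏ k, ∫ ω, X k ω ^ r k ∂μ) (m : ℕ) :
    ∫ ω, (∑ k, X k ω) ^ m ∂μ
      = ∑ r ∈ Finset.piAntidiag Finset.univ m,
          (Nat.multinomial Finset.univ r : ℝ) * ∏ k, ∫ ω, X k ω ^ r k ∂μ := by
  have hexp : ∀ ω : Ω, (∑ k, X k ω) ^ m = ∑ r ∈ Finset.piAntidiag Finset.univ m,
      (Nat.multinomial Finset.univ r : ℝ) * ∏ k, X k ω ^ r k :=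
    fun ω => Finset.sum_pow_eq_sum_piAntidiag _ _ m
  simp_rw [hexp]
  rw [integral_finset_sum _ (fun r _ => ((haux r).1).const_mul _)]
  exact Finset.sum_congr rfl fun r _ => by rw [MeasureTheory.integral_const_mul, (haux r).2]

lemma aux_term (β : ℝ) (hβ : 0 < β) {d n : ℕ} (a : Fin d → ℝ) (s : Fin d → ℕ)
    (hs : ∑ k, s k = n) :
    (Nat.multinomial Finset.univ (fun k => 2 * s k) : ℝ) *
      ∏ k, ((2 * s k).factorial / (2 ^ s k * Real.Gamma (β * s k + 1)) * a k ^ s k)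
    = (2 * n).factorial / 2 ^ n *
        ((∏ k, a k ^ s k) / ∏ k, Real.Gamma (β * (s k : ℝ) + 1)) := by
  have hsum : ∑ k, 2 * s k = 2 * n := by rw [← Finset.mul_sum, hs]
  have hM : (∏ k, ((2 * s k).factorial : ℝ)) * (Nat.multinomial Finset.univ fun k => 2 * s k : ℝ)
      = ((2 * n).factorial : ℝ) := by
    rw [← Nat.cast_prod, ← Nat.cast_mul, Nat.multinomial_spec, hsum]
  have hG : ∀ k : Fin d, 0 < Real.Gamma (β * s k + 1) := fun k =>
    Real.Gamma_pos_of_pos (by positivity)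
  have hGprod : (∏ k, Real.Gamma (β * (s k : ℝ) + 1)) ≠ 0 :=
    ne_of_gt (Finset.prod_pos fun k _ => hG k)
  have hF : (∏ k, ((2 * s k).factorial : ℝ)) ≠ 0 := by positivity
  simp only [Finset.prod_mul_distrib, Finset.prod_div_distrib, Finset.prod_pow_eq_pow_sum, hs]
  field_simp
  linear_combination (∏ k, a k ^ s k) * hM

/-- Moments of a sum of independent random variables each having the moments of a
one-dimensional Mittag-Leffler random variable: the odd moments vanish, and the even
moments are given by a multinomial-type sum over tuples `r ∈ ℕ₀^d` with `∑ r_k = n`. -/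
theorem moments_sum_of_indep_mittagLeffler_moments {Ω : Type*} [MeasurableSpace Ω]
    (μ : Measure Ω) [IsProbabilityMeasure μ] (β : ℝ) (hβ : 0 < β) (hβ1 : β ≤ 1)
    (d : ℕ) (hd : 1 ≤ d) (a : Fin d → ℝ) (ha : ∀ k, 0 ≤ a k)
    (X : Fin d → Ω → ℝ) (hX : ∀ k, Measurable (X k))
    (hindep : iIndepFun X μ)
    (hint : ∀ k, ∀ m : ℕ, Integrable (fun ω => X k ω ^ m) μ)
    (hodd : ∀ k, ∀ m : ℕ, ∫ ω, X k ω ^ (2 * m + 1) ∂μ = 0)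
    (heven : ∀ k, ∀ m : ℕ, ∫ ω, X k ω ^ (2 * m) ∂μ
      = (2 * m).factorial / (2 ^ m * Real.Gamma (β * m + 1)) * a k ^ m) :
    ∀ n : ℕ,
      (∫ ω, (∑ k, X k ω) ^ (2 * n + 1) ∂μ = 0) ∧
      (∫ ω, (∑ k, X k ω) ^ (2 * n) ∂μ
        = (2 * n).factorial / 2 ^ n *
          ∑ r ∈ Finset.Nat.antidiagonalTuple d n,
            (∏ k, a k ^ r k) / ∏ k, Real.Gamma (β * r k + 1)) := by
  classical
  have haux : ∀ r : Fin d → ℕ,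
      Integrable (fun ω => ∏ k, X k ω ^ r k) μ ∧
      ∫ ω, ∏ k, X k ω ^ r k ∂μ = ∏ k, ∫ ω, X k ω ^ r k ∂μ :=
    fun r => aux_prod_indep μ X hX hindep hint r Finset.univ
  -- terms with an odd exponent vanish
  have hzero : ∀ r : Fin d → ℕ, (¬ ∀ k, Even (r k)) →
      (Nat.multinomial Finset.univ r : ℝ) * ∏ k, ∫ ω, X k ω ^ r k ∂μ = 0 := by
    intro r hr
    obtain ⟨k, hk⟩ := not_forall.mp hr
    rw [Nat.not_even_iff_odd] at hk
    obtain ⟨t, ht⟩ := hk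
    have h0 : ∫ ω, X k ω ^ r k ∂μ = 0 := by rw [ht]; exact hodd k t
    rw [Finset.prod_eq_zero (Finset.mem_univ k) h0, mul_zero]
  intro n
  constructor
  · rw [aux_key μ X haux (2 * n + 1)]
    apply Finset.sum_eq_zero
    intro r hr
    rw [Finset.mem_piAntidiag] at hr
    apply hzero
    intro h
    have he : Even (∑ k, r k) := Finset.even_sum _ (fun k _ => h k)
    rw [hr.1] at he
    obtain ⟨t, ht⟩ := he
    omega
  · rw [aux_key μ X haux (2 * n)]
    have hinj : Set.InjOn (fun (s : Fin d → ℕ) (k : Fin d) => 2 * s k)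
        (Finset.Nat.antidiagonalTuple d n) := by
      intro s1 _ s2 _ h
      funext k
      have h2 : 2 * s1 k = 2 * s2 k := congrFun h k
      omega
    have hsub : (Finset.Nat.antidiagonalTuple d n).image (fun s k => 2 * s k)
        ⊆ Finset.piAntidiag Finset.univ (2 * n) := by
      intro r hr
      rw [Finset.mem_image] at hr
      obtain ⟨s, hs, rfl⟩ := hr
      rw [Finset.Nat.mem_antidiagonalTuple] at hs
      rw [Finset.mem_piAntidiag]
      exact ⟨by rw [← Finset.mul_sum, hs], fun i _ => Finset.mem_univ i⟩
    have hstep : ∑ r ∈ Finset.piAntidiag Finset.univ (2 * n),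
        (Nat.multinomial Finset.univ r : ℝ) * ∏ k, ∫ ω, X k ω ^ r k ∂μ
        = ∑ s ∈ Finset.Nat.antidiagonalTuple d n,
          (Nat.multinomial Finset.univ (fun k => 2 * s k) : ℝ)
            * ∏ k, ∫ ω, X k ω ^ (2 * s k) ∂μ := by
      rw [← Finset.sum_subset hsub ?_, Finset.sum_image (fun s hs s' hs' h => hinj hs hs' h)]
      intro r hr hnot
      apply hzero
      intro hall
      apply hnot
      rw [Finset.mem_image]
      refine ⟨fun k => r k / 2, ?_, ?_⟩
      · rw [Finset.mem_piAntidiag] at hr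
        rw [Finset.Nat.mem_antidiagonalTuple]
        have : ∑ k, 2 * (r k / 2) = ∑ k, r k := by
          apply Finset.sum_congr rfl
          intro k _
          obtain ⟨t, ht⟩ := hall k
          omega
        rw [← Finset.mul_sum] at this
        have h2 : ∑ i, r i = 2 * n := hr.1
        omega
      · funext k
        show 2 * (r k / 2) = r k
        obtain ⟨t, ht⟩ := hall k
        omega
    rw [hstep, Finset.mul_sum]
    apply Finset.sum_congr rfl
    intro s hs
    rw [Finset.Nat.mem_antidiagonalTuple] at hs
    calc (Nat.multinomial Finset.univ (fun k => 2 * s k) : ℝ)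
          * ∏ k, ∫ ω, X k ω ^ (2 * s k) ∂μ
        = (Nat.multinomial Finset.univ (fun k => 2 * s k) : ℝ) *
            ∏ k, ((2 * s k).factorial / (2 ^ s k * Real.Gamma (β * s k + 1)) * a k ^ s k) := by
          rw [Finset.prod_congr rfl fun k _ => heven k (s k)]
      _ = (2 * n).factorial / 2 ^ n *
            ((∏ k, a k ^ s k) / ∏ k, Real.Gamma (β * (s k : ℝ) + 1)) :=
          aux_term β hβ a s hs
end

section
/- Let 0 < β ≤ 1, d ≥ 1, a_1, …, a_d ≥ 0, and let X_1, …, X_d : Ω → ℝ be mutually independent random variables on a probability space (Ω, 𝓕, μ) such that for every k and every λ ∈ ℝ the function exp(|λ X_k|) is integrable and ∫_Ω e^{λ X_k} dμ = E_β(λ² a_k / 2). Then for every complex number z, the function ω ↦ exp(|z| · |X_1(ω) + ⋯ + X_d(ω)|) is integrable and ∫_Ω e^{z (X_1 + ⋯ + X_d)} dμ = ∏_{k=1}^d E_β(z² a_k / 2). In particular, taking z = i p with p ∈ ℝ, the characteristic function of X_1 + ⋯ + X_d at p equals ∏_{k=1}^d E_β(−p² a_k / 2). -/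
open MeasureTheory ProbabilityTheory Topology Filter

/-- An everywhere-convergent power series defines an entire function. -/
lemma analyticOnNhd_tsum_pow {c : ℕ → ℂ}
    (hsum : ∀ r : ℝ, 0 ≤ r → Summable (fun n => ‖c n‖ * r ^ n)) :
    AnalyticOnNhd ℂ (fun z => ∑' n, c n * z ^ n) Set.univ := by
  set p := FormalMultilinearSeries.ofScalars ℂ c with hp
  have hnorm : ∀ n, ‖p n‖ = ‖c n‖ := fun n => FormalMultilinearSeries.ofScalars_norm ℂ c n
  have hrad : p.radius = ⊤ := by
    refine top_unique (ENNReal.le_of_forall_nnreal_lt fun r _ => ?_)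
    apply p.le_radius_of_summable
    simpa only [hnorm] using hsum r r.coe_nonneg
  have hball : HasFPowerSeriesOnBall (fun z => ∑' n, c n * z ^ n) p 0 ⊤ := by
    refine ⟨hrad.ge, ENNReal.zero_lt_top, fun {y} _ => ?_⟩
    have hs : Summable (fun n => c n * y ^ n) := by
      refine Summable.of_norm (Summable.of_nonneg_of_le (fun n => norm_nonneg _) (fun n => ?_)
        (hsum ‖y‖ (norm_nonneg _)))
      rw [norm_mul, norm_pow]
    have : ∀ n, p n (fun _ => y) = c n * y ^ n := fun n => by
      rw [hp, FormalMultilinearSeries.ofScalars_apply_eq, smul_eq_mul]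
    simp only [this, zero_add]
    exact hs.hasSum
  simpa using hball.analyticOnNhd

section MGF
variable {Ω : Type*} [MeasurableSpace Ω] (μ : Measure Ω) [IsProbabilityMeasure μ]

lemma exp_abs_integrable (Y : Ω → ℝ) (hY : Measurable Y)
    (hint : ∀ l : ℝ, Integrable (fun ω => Real.exp (l * Y ω)) μ) (r : ℝ) :
    Integrable (fun ω => Real.exp (r * |Y ω|)) μ := by
  refine Integrable.mono' ((hint r).add (hint (-r))) ((hY.abs.const_mul r).exp).aestronglyMeasurable
    (Filter.Eventually.of_forall fun ω => ?_)
  rw [Real.norm_of_nonneg (Real.exp_pos _).le]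
  rcases abs_cases (Y ω) with ⟨h1, _⟩ | ⟨h1, _⟩
  · rw [h1]
    exact le_add_of_nonneg_right (Real.exp_pos _).le
  · rw [h1, mul_neg, ← neg_mul]
    exact le_add_of_nonneg_left (Real.exp_pos _).le

lemma abs_pow_integrable (Y : Ω → ℝ) (hY : Measurable Y)
    (hint : ∀ l : ℝ, Integrable (fun ω => Real.exp (l * Y ω)) μ) (n : ℕ) :
    Integrable (fun ω => |Y ω| ^ n) μ := by
  refine Integrable.mono' ((exp_abs_integrable μ Y hY hint 1).const_mul (n.factorial : ℝ))
    (hY.abs.pow_const n).aestronglyMeasurable (Filter.Eventually.of_forall fun ω => ?_)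
  rw [Real.norm_of_nonneg (by positivity)]
  have h := Real.sum_le_exp_of_nonneg (abs_nonneg (Y ω)) (n + 1)
  have h2 : |Y ω| ^ n / n.factorial ≤ Real.exp |Y ω| := by
    refine le_trans ?_ h
    have : |Y ω| ^ n / n.factorial = ∑ i ∈ Finset.range (n+1), if i = n then |Y ω| ^ i / i.factorial else 0 := by
      simp [Finset.sum_ite_eq']
    rw [this]
    refine Finset.sum_le_sum fun i _ => ?_
    split
    · exact le_rfl
    · positivity
  rw [one_mul]
  calc |Y ω| ^ n = (n.factorial : ℝ) * (|Y ω| ^ n / n.factorial) := by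
        field_simp
    _ ≤ (n.factorial : ℝ) * Real.exp |Y ω| := by
        exact mul_le_mul_of_nonneg_left h2 (by positivity)

lemma key_summable (Y : Ω → ℝ) (hY : Measurable Y)
    (hint : ∀ l : ℝ, Integrable (fun ω => Real.exp (l * Y ω)) μ) (r : ℝ) (hr : 0 ≤ r) :
    Summable (fun n : ℕ => r ^ n / n.factorial * ∫ ω, |Y ω| ^ n ∂μ) := by
  have hterm : ∀ n : ℕ, Integrable (fun ω => r ^ n / n.factorial * |Y ω| ^ n) μ :=
    fun n => (abs_pow_integrable μ Y hY hint n).const_mul _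
  refine summable_of_sum_range_le (c := ∫ ω, Real.exp (r * |Y ω|) ∂μ) (fun n => ?_) (fun N => ?_)
  · have : (0:ℝ) ≤ ∫ ω, |Y ω| ^ n ∂μ := integral_nonneg (fun ω => by positivity)
    positivity
  · have : ∀ n : ℕ, r ^ n / n.factorial * ∫ ω, |Y ω| ^ n ∂μ
        = ∫ ω, r ^ n / n.factorial * |Y ω| ^ n ∂μ := fun n => (integral_const_mul _ _).symm
    simp_rw [this]
    rw [← integral_finset_sum _ (fun i _ => hterm i)]
    refine integral_mono (integrable_finset_sum _ (fun i _ => hterm i))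
      (exp_abs_integrable μ Y hY hint r) (fun ω => ?_)
    have := Real.sum_le_exp_of_nonneg (by positivity : (0:ℝ) ≤ r * |Y ω|) N
    refine le_trans (le_of_eq ?_) this
    refine Finset.sum_congr rfl fun i _ => ?_
    rw [mul_pow, mul_comm (r ^ i) _, mul_div_assoc, mul_comm]

lemma complexMGF_hasSum (Y : Ω → ℝ) (hY : Measurable Y)
    (hint : ∀ l : ℝ, Integrable (fun ω => Real.exp (l * Y ω)) μ) (z : ℂ) :
    HasSum (fun n : ℕ => (((∫ ω, Y ω ^ n ∂μ : ℝ)) : ℂ) / n.factorial * z ^ n)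
      (∫ ω, Complex.exp (z * (Y ω : ℂ)) ∂μ) := by
  set F : ℕ → Ω → ℂ := fun n ω => z ^ n / n.factorial * ((Y ω : ℂ)) ^ n with hF
  have hYn : ∀ n, Integrable (fun ω => Y ω ^ n) μ := by
    intro n
    refine (abs_pow_integrable μ Y hY hint n).mono' (hY.pow_const n).aestronglyMeasurable
      (Filter.Eventually.of_forall fun ω => ?_)
    rw [Real.norm_eq_abs, abs_pow]
  have hF_int : ∀ n, Integrable (F n) μ := by
    intro n
    exact (((hYn n).ofReal (𝕜 := ℂ)).const_mul (z ^ n / (n.factorial : ℂ))).congr (Filter.Eventually.of_forall fun ω => by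
      rw [hF]; push_cast [Complex.ofReal_natCast]; ring_nf; norm_cast)
  have hF_norm : ∀ n ω, ‖F n ω‖ = ‖z‖ ^ n / n.factorial * |Y ω| ^ n := by
    intro n ω
    simp [hF, Complex.norm_natCast, abs_pow, Complex.norm_real, norm_div, norm_pow]
  have hF_sum : Summable fun n => ∫ ω, ‖F n ω‖ ∂μ := by
    have : ∀ n : ℕ, ∫ ω, ‖F n ω‖ ∂μ = ‖z‖ ^ n / n.factorial * ∫ ω, |Y ω| ^ n ∂μ := by
      intro n
      simp_rw [hF_norm]
      exact integral_const_mul _ _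
    simp_rw [this]
    exact key_summable μ Y hY hint ‖z‖ (norm_nonneg z)
  have hmain := hasSum_integral_of_summable_integral_norm hF_int hF_sum
  have htsum : ∀ ω, ∑' n, F n ω = Complex.exp (z * (Y ω : ℂ)) := by
    intro ω
    rw [Complex.exp_eq_exp_ℂ, NormedSpace.exp_eq_tsum_div]
    refine tsum_congr fun n => ?_
    rw [hF, mul_pow, mul_comm (z ^ n) _, mul_div_assoc, mul_comm]
  have hint_eq : ∀ n, ∫ ω, F n ω ∂μ
      = (((∫ ω, Y ω ^ n ∂μ : ℝ)) : ℂ) / n.factorial * z ^ n := by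
    intro n
    rw [hF]
    simp only
    rw [integral_const_mul]
    have : ∫ ω, ((Y ω : ℂ)) ^ n ∂μ = (((∫ ω, Y ω ^ n ∂μ : ℝ)) : ℂ) := by
      simp_rw [← Complex.ofReal_pow]
      exact integral_ofReal
    rw [this]
    ring
  simp_rw [htsum] at hmain
  have hfun : (fun n : ℕ => (((∫ ω, Y ω ^ n ∂μ : ℝ)) : ℂ) / n.factorial * z ^ n) = fun n => ∫ ω, F n ω ∂μ :=
    funext fun n => (hint_eq n).symm
  rw [hfun]; exact hmain

lemma complexMGF_integrable (Y : Ω → ℝ) (hY : Measurable Y)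
    (hint : ∀ l : ℝ, Integrable (fun ω => Real.exp (l * Y ω)) μ) (z : ℂ) :
    Integrable (fun ω => Complex.exp (z * (Y ω : ℂ))) μ := by
  refine (hint z.re).mono' ?_ (Filter.Eventually.of_forall fun ω => ?_)
  · exact (Complex.measurable_exp.comp
      ((Complex.measurable_ofReal.comp hY).const_mul z)).aestronglyMeasurable
  · rw [Complex.norm_exp]
    apply le_of_eq
    congr 1
    simp [Complex.mul_re]

lemma complexMGF_analytic (Y : Ω → ℝ) (hY : Measurable Y)
    (hint : ∀ l : ℝ, Integrable (fun ω => Real.exp (l * Y ω)) μ) :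
    AnalyticOnNhd ℂ (fun z => ∫ ω, Complex.exp (z * (Y ω : ℂ)) ∂μ) Set.univ := by
  set c : ℕ → ℂ := fun n => (((∫ ω, Y ω ^ n ∂μ : ℝ)) : ℂ) / n.factorial with hc
  have heq : (fun z => ∫ ω, Complex.exp (z * (Y ω : ℂ)) ∂μ) = fun z => ∑' n, c n * z ^ n := by
    funext z
    exact ((complexMGF_hasSum μ Y hY hint z).tsum_eq).symm
  rw [heq]
  refine analyticOnNhd_tsum_pow fun r hr => ?_
  refine Summable.of_nonneg_of_le (fun n => by positivity) (fun n => ?_)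
    (key_summable μ Y hY hint r hr)
  have hnc : ‖c n‖ = |∫ ω, Y ω ^ n ∂μ| / n.factorial := by
    rw [hc]; simp [norm_div]
  have habs : |∫ ω, Y ω ^ n ∂μ| ≤ ∫ ω, |Y ω| ^ n ∂μ := by
    calc |∫ ω, Y ω ^ n ∂μ| ≤ ∫ ω, |Y ω ^ n| ∂μ := by
          simpa [Real.norm_eq_abs] using norm_integral_le_integral_norm (fun ω => Y ω ^ n)
      _ = ∫ ω, |Y ω| ^ n ∂μ := by simp_rw [abs_pow]
  calc ‖c n‖ * r ^ n = |∫ ω, Y ω ^ n ∂μ| / n.factorial * r ^ n := by rw [hnc]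
    _ ≤ (∫ ω, |Y ω| ^ n ∂μ) / n.factorial * r ^ n := by gcongr
    _ = r ^ n / n.factorial * ∫ ω, |Y ω| ^ n ∂μ := by ring

end MGF

lemma mittagLeffler_ofReal (β : ℝ) (x : ℝ) :
    mittagLeffler β 1 ((x : ℂ)) = ((mittagLefflerReal β x : ℝ) : ℂ) := by
  rw [mittagLeffler, mittagLefflerReal, Complex.ofReal_tsum]
  refine tsum_congr fun n => ?_
  push_cast
  ring

lemma even_coeff_tsum (aa β : ℝ) (ha : 0 ≤ aa) (hβ : 0 < β) (z : ℂ) :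
    mittagLeffler β 1 (z ^ 2 * (aa : ℂ) / 2)
      = ∑' n : ℕ, (fun n : ℕ => if Even n then
          (((aa / 2) ^ (n / 2) / Real.Gamma (β * ((n / 2 : ℕ) : ℝ) + 1) : ℝ) : ℂ) else 0) n * z ^ n := by
  set e : ℕ → ℂ := fun n => if Even n then
      (((aa / 2) ^ (n / 2) / Real.Gamma (β * ((n / 2 : ℕ) : ℝ) + 1) : ℝ) : ℂ) else 0 with he
  have hinj : Function.Injective (fun j : ℕ => 2 * j) := fun a b h => by
    dsimp at h; omega
  have hsupp : Function.support (fun n => e n * z ^ n) ⊆ Set.range (fun j : ℕ => 2 * j) := by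
    intro n hn
    rcases Nat.even_or_odd n with h | h
    · obtain ⟨j, hj⟩ := h
      exact ⟨j, by dsimp; omega⟩
    · exfalso
      apply hn
      rw [he]
      simp [Nat.not_even_iff_odd.2 h]
  rw [← Function.Injective.tsum_eq hinj hsupp]
  rw [mittagLeffler]
  refine tsum_congr fun j => ?_
  have h2 : (2 * j : ℕ) / 2 = j := by omega
  simp only [he, if_pos (even_two_mul j), h2]
  rw [show z ^ 2 * (aa : ℂ) / 2 = z ^ 2 * ((aa : ℂ) / 2) by ring, mul_pow, pow_mul]
  push_cast
  ring

lemma mittagLeffler_analytic (aa β : ℝ) (ha : 0 ≤ aa) (hβ : 0 < β)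
    (hsum : ∀ r : ℝ, 0 ≤ r → Summable (fun j : ℕ => (aa * r ^ 2 / 2) ^ j / Real.Gamma (β * j + 1))) :
    AnalyticOnNhd ℂ (fun z => mittagLeffler β 1 (z ^ 2 * (aa : ℂ) / 2)) Set.univ := by
  set e : ℕ → ℂ := fun n => if Even n then
      (((aa / 2) ^ (n / 2) / Real.Gamma (β * ((n / 2 : ℕ) : ℝ) + 1) : ℝ) : ℂ) else 0 with he
  have heq : (fun z => mittagLeffler β 1 (z ^ 2 * (aa : ℂ) / 2))
      = fun z => ∑' n, e n * z ^ n := funext fun z => even_coeff_tsum aa β ha hβ z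
  rw [heq]
  refine analyticOnNhd_tsum_pow fun r hr => ?_
  have hinj : Function.Injective (fun j : ℕ => 2 * j) := fun a b h => by
    dsimp at h; omega
  have hsupp : ∀ n ∉ Set.range (fun j : ℕ => 2 * j), ‖e n‖ * r ^ n = 0 := by
    intro n hn
    have : ¬ Even n := by
      rintro ⟨j, hj⟩
      refine hn ⟨j, ?_⟩
      dsimp
      omega
    simp [he, this]
  rw [← Function.Injective.summable_iff hinj hsupp]
  have heq2 : (fun n => ‖e n‖ * r ^ n) ∘ (fun j : ℕ => 2 * j)
      = fun j : ℕ => (aa * r ^ 2 / 2) ^ j / Real.Gamma (β * j + 1) := by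
    funext j
    have h2 : (2 * j : ℕ) / 2 = j := by omega
    have hG : 0 < Real.Gamma (β * j + 1) := Real.Gamma_pos_of_pos (by positivity)
    simp only [Function.comp_apply, he, if_pos (even_two_mul j), h2, Complex.norm_real,
      Real.norm_eq_abs]
    rw [abs_div, abs_of_pos hG, abs_pow, abs_of_nonneg (by positivity : (0:ℝ) ≤ aa / 2)]
    rw [pow_mul, show aa * r ^ 2 / 2 = (aa / 2) * r ^ 2 by ring, mul_pow]
    ring
  rw [heq2]
  exact hsum r hr

/-- For independent random variables `X_k` with moment generating functions
`λ ↦ E_β(λ² a_k / 2)`, for every complex `z` the function `e^{|z|·|X_1+⋯+X_d|}` is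
integrable, `∫ e^{z(X_1+⋯+X_d)} dμ = ∏_k E_β(z² a_k / 2)`, and in particular the
characteristic function of the sum at `p ∈ ℝ` equals `∏_k E_β(-p² a_k / 2)`. -/
theorem complex_mgf_sum_of_indep_mittagLeffler {Ω : Type*} [MeasurableSpace Ω]
    (μ : Measure Ω) [IsProbabilityMeasure μ] (β : ℝ) (hβ : 0 < β) (hβ1 : β ≤ 1)
    (d : ℕ) (hd : 1 ≤ d) (a : Fin d → ℝ) (ha : ∀ k, 0 ≤ a k)
    (X : Fin d → Ω → ℝ) (hX : ∀ k, Measurable (X k))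
    (hindep : iIndepFun X μ)
    (hint : ∀ k, ∀ l : ℝ, Integrable (fun ω => Real.exp |l * X k ω|) μ)
    (hmgf : ∀ k, ∀ l : ℝ, ∫ ω, Real.exp (l * X k ω) ∂μ
      = mittagLefflerReal β (l ^ 2 * a k / 2)) :
    (∀ z : ℂ,
      Integrable (fun ω => Real.exp (‖z‖ * |∑ k, X k ω|)) μ ∧
      ∫ ω, Complex.exp (z * ((∑ k, X k ω : ℝ) : ℂ)) ∂μ
        = ∏ k, mittagLeffler β 1 (z ^ 2 * (a k : ℂ) / 2)) ∧
    (∀ p : ℝ,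
      ∫ ω, Complex.exp (Complex.I * (p : ℂ) * ((∑ k, X k ω : ℝ) : ℂ)) ∂μ
        = ∏ k, mittagLeffler β 1 (-((p : ℂ) ^ 2 * (a k : ℂ) / 2))) := by
  classical
  set S : Ω → ℝ := fun ω => ∑ k, X k ω with hS
  have hSmeas : Measurable S := Finset.measurable_sum Finset.univ (fun k _ => hX k)
  have hintk : ∀ k (l : ℝ), Integrable (fun ω => Real.exp (l * X k ω)) μ := by
    intro k l
    refine (hint k l).mono' (((hX k).const_mul l).exp).aestronglyMeasurable
      (Filter.Eventually.of_forall fun ω => ?_)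
    rw [Real.norm_of_nonneg (Real.exp_pos _).le]
    exact Real.exp_le_exp.2 (le_abs_self _)
  have hintS : ∀ l : ℝ, Integrable (fun ω => Real.exp (l * S ω)) μ := by
    intro l
    have h := iIndepFun.integrable_exp_mul_sum hindep hX (s := Finset.univ)
      (fun i _ => hintk i l)
    refine h.congr (Filter.Eventually.of_forall fun ω => ?_)
    simp [hS, Finset.sum_apply]
  have hsumk : ∀ k, ∀ r : ℝ, 0 ≤ r →
      Summable (fun j : ℕ => (a k * r ^ 2 / 2) ^ j / Real.Gamma (β * j + 1)) := by
    intro k r _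
    by_contra hns
    have h0 : mittagLefflerReal β (r ^ 2 * a k / 2) = 0 := by
      rw [mittagLefflerReal, show r ^ 2 * a k / 2 = a k * r ^ 2 / 2 by ring]
      exact tsum_eq_zero_of_not_summable hns
    have hpos : 0 < ∫ ω, Real.exp (r * X k ω) ∂μ := by
      have h := ProbabilityTheory.mgf_pos (X := X k) (μ := μ) (t := r) (hintk k r)
      simpa [ProbabilityTheory.mgf] using h
    rw [hmgf k r, h0] at hpos
    exact lt_irrefl 0 hpos
  have hML_real : ∀ k (l : ℝ), mittagLeffler β 1 ((l:ℂ) ^ 2 * (a k : ℂ) / 2)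
      = ((mittagLefflerReal β (l ^ 2 * a k / 2) : ℝ) : ℂ) := by
    intro k l
    rw [show ((l:ℂ) ^ 2 * (a k : ℂ) / 2) = ((l ^ 2 * a k / 2 : ℝ) : ℂ) by push_cast; ring,
      mittagLeffler_ofReal]
  set M : ℂ → ℂ := fun z => ∫ ω, Complex.exp (z * ((S ω : ℝ) : ℂ)) ∂μ with hM
  set G : ℂ → ℂ := fun z => ∏ k, mittagLeffler β 1 (z ^ 2 * (a k : ℂ) / 2) with hG
  have hManalytic : AnalyticOnNhd ℂ M Set.univ := complexMGF_analytic μ S hSmeas hintS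
  have hGanalytic : AnalyticOnNhd ℂ G Set.univ :=
    Finset.analyticOnNhd_fun_prod Finset.univ (fun k _ =>
      mittagLeffler_analytic (a k) β (ha k) hβ (hsumk k))
  have hreal : ∀ l : ℝ, M ((l : ℂ)) = G ((l : ℂ)) := by
    intro l
    have h1 : M ((l : ℂ)) = ((∫ ω, Real.exp (l * S ω) ∂μ : ℝ) : ℂ) := by
      show (∫ ω, Complex.exp ((l:ℂ) * ((S ω : ℝ) : ℂ)) ∂μ) = ((∫ ω, Real.exp (l * S ω) ∂μ : ℝ) : ℂ)
      calc (∫ ω, Complex.exp ((l:ℂ) * ((S ω : ℝ) : ℂ)) ∂μ)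
          = ∫ ω, ((Real.exp (l * S ω) : ℝ) : ℂ) ∂μ := by
            refine integral_congr_ae (Filter.Eventually.of_forall fun ω => ?_)
            show Complex.exp ((l:ℂ) * ((S ω : ℝ):ℂ)) = ((Real.exp (l * S ω) : ℝ) : ℂ)
            rw [← Complex.ofReal_mul, Complex.ofReal_exp]
        _ = ((∫ ω, Real.exp (l * S ω) ∂μ : ℝ) : ℂ) := integral_ofReal
    have h2 : ∫ ω, Real.exp (l * S ω) ∂μ = ∏ k, mittagLefflerReal β (l ^ 2 * a k / 2) := by
      have hmg := hindep.mgf_sum hX (s := Finset.univ) (t := l)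
      have hL : ∫ ω, Real.exp (l * S ω) ∂μ = mgf (∑ i, X i) μ l := by
        rw [mgf]
        refine integral_congr_ae (Filter.Eventually.of_forall fun ω => ?_)
        simp [hS, Finset.sum_apply]
      rw [hL, hmg]
      refine Finset.prod_congr rfl fun k _ => ?_
      rw [mgf]
      exact hmgf k l
    rw [h1, h2, Complex.ofReal_prod, hG]
    exact Finset.prod_congr rfl fun k _ => (hML_real k l).symm
  have hfreq : ∃ᶠ z in nhdsWithin 0 {z : ℂ | z ≠ 0}, M z = G z := by
    have h0 : Filter.Tendsto (fun n : ℕ => (((n:ℝ)+1)⁻¹ : ℝ)) Filter.atTop (𝓝 0) := by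
      simpa [one_div] using tendsto_one_div_add_atTop_nhds_zero_nat (𝕜 := ℝ)
    have h1 : Filter.Tendsto (fun n : ℕ => ((((n:ℝ)+1)⁻¹ : ℝ) : ℂ)) Filter.atTop (𝓝 0) := by
      have h2 := (Complex.continuous_ofReal.tendsto 0).comp h0
      rw [show ((0:ℝ):ℂ) = 0 from Complex.ofReal_zero] at h2
      exact h2
    have htend : Filter.Tendsto (fun n : ℕ => ((((n:ℝ)+1)⁻¹ : ℝ) : ℂ)) Filter.atTop
        (nhdsWithin 0 {z : ℂ | z ≠ 0}) := by
      refine tendsto_nhdsWithin_of_tendsto_nhds_of_eventually_within _ h1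
        (Filter.Eventually.of_forall fun n => ?_)
      simp only [Set.mem_setOf_eq, ne_eq, Complex.ofReal_eq_zero]
      positivity
    exact htend.frequently (Filter.Frequently.of_forall fun n => hreal _)
  have hMG : M = G := hManalytic.eq_of_frequently_eq hGanalytic hfreq
  refine ⟨fun z => ⟨?_, congr_fun hMG z⟩, fun p => ?_⟩
  · exact exp_abs_integrable μ S hSmeas hintS ‖z‖
  · have h := congr_fun hMG (Complex.I * (p : ℂ))
    simp only [hM, hG] at h
    rw [h]
    refine Finset.prod_congr rfl fun k _ => ?_
    congr 1
    rw [mul_pow, Complex.I_sq]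
    ring
end

section
/- Let 0 < β ≤ 1, 0 < α < 2, d ≥ 1, and let R_α(t,s) := (t^α + s^α − |t−s|^α)/2 for t, s ≥ 0. Let (X_t)_{t ≥ 0} be a family of random vectors X_t = (X_{t,1}, …, X_{t,d}) : Ω → ℝ^d on a probability space (Ω, 𝓕, μ) such that for every n ≥ 1, all times t_1, …, t_n ≥ 0, and every matrix p = (p_{k,r}) ∈ ℝ^{d×n}, ∫_Ω exp(i ∑_{r=1}^n ∑_{k=1}^d p_{k,r} X_{t_r,k}(ω)) dμ(ω) = ∏_{k=1}^d E_β(−(1/2) ∑_{r=1}^n ∑_{q=1}^n p_{k,r} p_{k,q} R_α(t_r, t_q)). Then the process is self-similar with index α/2: for every a > 0, every n ≥ 1 and all t_1, …, t_n ≥ 0, the pushforward law under μ of the map ω ↦ (X_{a t_1}(ω), …, X_{a t_n}(ω)) ∈ (ℝ^d)^n equals the pushforward law of the map ω ↦ (a^{α/2} X_{t_1}(ω), …, a^{α/2} X_{t_n}(ω)). -/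
open MeasureTheory Set

/-- The ggBm covariance kernel `R_α(t,s) = (t^α + s^α - |t-s|^α)/2`. -/
noncomputable def ggBmCov (α t s : ℝ) : ℝ := (t ^ α + s ^ α - |t - s| ^ α) / 2

section CharFunUniqueness

variable {ι : Type*} [Fintype ι]

private lemma contProdAux (L : ℝ) (u : ι → C(AddCircle L, ℂ)) :
    Continuous fun x : ι → ℝ => ∏ i, u i ((x i : ℝ) : AddCircle L) :=
  continuous_finset_prod _ fun i _ =>
    (u i).continuous.comp (continuous_quotient_mk'.comp (continuous_apply i))

/-- The continuous linear functional `v ↦ ∫ v(x j) * g x ∂m`. -/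
private noncomputable def smearCLM (L : ℝ) [Fact (0 < L)] (j : ι)
    (g : (ι → ℝ) → ℂ) (hgc : Continuous g) (C : ℝ) (hgb : ∀ x, ‖g x‖ ≤ C)
    (m : Measure (ι → ℝ)) [IsProbabilityMeasure m] : C(AddCircle L, ℂ) →L[ℂ] ℂ :=
  have hb : ∀ (v : C(AddCircle L, ℂ)) (x : ι → ℝ),
      ‖v ((x j : ℝ) : AddCircle L) * g x‖ ≤ ‖v‖ * C := fun v x => by
    rw [norm_mul]
    exact mul_le_mul (v.norm_coe_le_norm _) (hgb x) (norm_nonneg _) (norm_nonneg _)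
  have hint : ∀ v : C(AddCircle L, ℂ),
      Integrable (fun x : ι → ℝ => v ((x j : ℝ) : AddCircle L) * g x) m := fun v =>
    (integrable_const (‖v‖ * C)).mono'
      ((v.continuous.comp (continuous_quotient_mk'.comp (continuous_apply j))).mul
        hgc).aestronglyMeasurable (ae_of_all m (hb v))
  LinearMap.mkContinuous
    { toFun := fun v => ∫ x, v ((x j : ℝ) : AddCircle L) * g x ∂m
      map_add' := fun v w => by
        simp_rw [ContinuousMap.add_apply, add_mul]
        exact integral_add (hint v) (hint w)
      map_smul' := fun c v => by
        show (∫ x, (c • v) ((x j : ℝ) : AddCircle L) * g x ∂m)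
            = (RingHom.id ℂ) c • ∫ x, v ((x j : ℝ) : AddCircle L) * g x ∂m
        have : (fun x : ι → ℝ => (c • v) ((x j : ℝ) : AddCircle L) * g x)
            = fun x : ι → ℝ => c • (v ((x j : ℝ) : AddCircle L) * g x) := by
          funext x
          simp [smul_eq_mul, mul_assoc]
        rw [this, integral_smul]
        rfl }
    C (fun v => by
      have h1 : ‖∫ x, v ((x j : ℝ) : AddCircle L) * g x ∂m‖ ≤ (‖v‖ * C) * (m univ).toReal :=
        norm_integral_le_of_norm_le_const (ae_of_all m (hb v))
      calc ‖∫ x, v ((x j : ℝ) : AddCircle L) * g x ∂m‖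
          ≤ (‖v‖ * C) * (m univ).toReal := h1
        _ = C * ‖v‖ := by simp [measure_univ, mul_comm])

private lemma smearCLM_apply (L : ℝ) [Fact (0 < L)] (j : ι)
    (g : (ι → ℝ) → ℂ) (hgc : Continuous g) (C : ℝ) (hgb : ∀ x, ‖g x‖ ≤ C)
    (m : Measure (ι → ℝ)) [IsProbabilityMeasure m] (v : C(AddCircle L, ℂ)) :
    smearCLM L j g hgc C hgb m v = ∫ x, v ((x j : ℝ) : AddCircle L) * g x ∂m := rfl

/-- Step 1: equality of characteristic functions implies equality of integrals of
finite products of continuous periodic functions of the coordinates. -/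
private lemma integral_periodic_prod_eq
    (μ ν : Measure (ι → ℝ)) [IsProbabilityMeasure μ] [IsProbabilityMeasure ν]
    (h : ∀ ξ : ι → ℝ, ∫ x, Complex.exp (Complex.I * ((∑ i, ξ i * x i : ℝ) : ℂ)) ∂μ
        = ∫ x, Complex.exp (Complex.I * ((∑ i, ξ i * x i : ℝ) : ℂ)) ∂ν)
    (L : ℝ) (hL : 0 < L) (u : ι → C(AddCircle L, ℂ)) :
    ∫ x, ∏ i, u i ((x i : ℝ) : AddCircle L) ∂μ
      = ∫ x, ∏ i, u i ((x i : ℝ) : AddCircle L) ∂ν := by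
  haveI : Fact (0 < L) := ⟨hL⟩
  classical
  suffices H : ∀ s : Finset ι, ∀ u : ι → C(AddCircle L, ℂ),
      (∀ i, i ∉ s → ∃ k : ℤ, u i = fourier k) →
      ∫ x, ∏ i, u i ((x i : ℝ) : AddCircle L) ∂μ
        = ∫ x, ∏ i, u i ((x i : ℝ) : AddCircle L) ∂ν from
    H Finset.univ u (fun i hi => absurd (Finset.mem_univ i) hi)
  intro s
  induction s using Finset.induction_on with
  | empty =>
      intro u hu
      choose k hk using fun i => hu i (Finset.notMem_empty i)
      have key : ∀ x : ι → ℝ, ∏ i, u i ((x i : ℝ) : AddCircle L)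
          = Complex.exp (Complex.I * ((∑ i, (2 * Real.pi * (k i) / L) * x i : ℝ) : ℂ)) := by
        intro x
        rw [Complex.ofReal_sum, Finset.mul_sum, Complex.exp_sum]
        refine Finset.prod_congr rfl fun i _ => ?_
        rw [hk i, fourier_coe_apply]
        congr 1
        push_cast
        ring
      simp_rw [key]
      exact h _
  | @insert j s hj ih =>
      intro u hu
      set g : (ι → ℝ) → ℂ := fun x => ∏ i ∈ Finset.univ.erase j, u i ((x i : ℝ) : AddCircle L)
        with hg
      have hgc : Continuous g :=
        continuous_finset_prod _ fun i _ =>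
          (u i).continuous.comp (continuous_quotient_mk'.comp (continuous_apply i))
      set C : ℝ := ∏ i ∈ Finset.univ.erase j, ‖u i‖ with hC
      have hgb : ∀ x, ‖g x‖ ≤ C := fun x => by
        rw [hg, hC, norm_prod]
        exact Finset.prod_le_prod (fun i _ => norm_nonneg _)
          (fun i _ => (u i).norm_coe_le_norm _)
      have hupd : ∀ (v : C(AddCircle L, ℂ)) (x : ι → ℝ),
          ∏ i, (Function.update u j v) i ((x i : ℝ) : AddCircle L)
            = v ((x j : ℝ) : AddCircle L) * g x := by
        intro v x
        rw [← Finset.prod_erase_mul _ _ (Finset.mem_univ j), Function.update_self, mul_comm]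
        congr 1
        exact Finset.prod_congr rfl fun i hi => by
          rw [Function.update_of_ne (Finset.ne_of_mem_erase hi)]
      have hTeq : smearCLM L j g hgc C hgb μ = smearCLM L j g hgc C hgb ν := by
        refine ContinuousLinearMap.ext_on
          (Submodule.dense_iff_topologicalClosure_eq_top.mpr span_fourier_closure_eq_top) ?_
        rintro _ ⟨k, rfl⟩
        rw [smearCLM_apply, smearCLM_apply]
        have harg : ∀ i, i ∉ s → ∃ k' : ℤ, Function.update u j (fourier k) i = fourier k' := by
          intro i hi
          by_cases hij : i = j
          · exact ⟨k, by rw [hij, Function.update_self]⟩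
          · obtain ⟨k', hk'⟩ := hu i (by simp [Finset.mem_insert, hij, hi])
            exact ⟨k', by rw [Function.update_of_ne hij]; exact hk'⟩
        have := ih (Function.update u j (fourier k)) harg
        simpa only [hupd] using this
      have := congrArg (fun T : C(AddCircle L, ℂ) →L[ℂ] ℂ => T (u j)) hTeq
      simp only [smearCLM_apply] at this
      simpa only [← hupd, Function.update_eq_self] using this

/-- Step 2: equality of measures of "periodized open sets". -/
private lemma measure_periodic_open_eq
    (μ ν : Measure (ι → ℝ)) [IsProbabilityMeasure μ] [IsProbabilityMeasure ν]
    (h : ∀ ξ : ι → ℝ, ∫ x, Complex.exp (Complex.I * ((∑ i, ξ i * x i : ℝ) : ℂ)) ∂μ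
        = ∫ x, Complex.exp (Complex.I * ((∑ i, ξ i * x i : ℝ) : ℂ)) ∂ν)
    (L : ℝ) (hL : 0 < L) (U : ι → Set (AddCircle L))
    (hUo : ∀ i, IsOpen (U i)) (hUne : ∀ i, (U i)ᶜ.Nonempty) :
    μ {x : ι → ℝ | ∀ i, ((x i : ℝ) : AddCircle L) ∈ U i}
      = ν {x : ι → ℝ | ∀ i, ((x i : ℝ) : AddCircle L) ∈ U i} := by
  haveI : Fact (0 < L) := ⟨hL⟩
  classical
  set S := {x : ι → ℝ | ∀ i, ((x i : ℝ) : AddCircle L) ∈ U i} with hS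
  have hSm : MeasurableSet S := by
    have : S = ⋂ i, (fun x : ι → ℝ => ((x i : ℝ) : AddCircle L)) ⁻¹' (U i) := by
      ext x; simp [hS]
    rw [this]
    exact MeasurableSet.iInter fun i => ((hUo i).measurableSet).preimage
      (AddCircle.measurable_mk'.comp (measurable_pi_apply i))
  set f : ℕ → ι → C(AddCircle L, ℂ) := fun m i =>
    ⟨fun z => ((min 1 (m * Metric.infDist z (U i)ᶜ) : ℝ) : ℂ),
      Complex.continuous_ofReal.comp
        (continuous_const.min (continuous_const.mul (Metric.continuous_infDist_pt _)))⟩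
    with hf
  have hfnorm : ∀ m i z, ‖f m i z‖ ≤ 1 := by
    intro m i z
    rw [hf]
    simp only [ContinuousMap.coe_mk, Complex.norm_real, Real.norm_eq_abs]
    rw [abs_of_nonneg (le_min zero_le_one
      (mul_nonneg (by positivity) Metric.infDist_nonneg))]
    exact min_le_left _ _
  -- pointwise limit of each factor
  have hfac : ∀ (i : ι) (z : AddCircle L),
      Filter.Tendsto (fun m => f m i z) Filter.atTop
        (nhds (if z ∈ U i then (1 : ℂ) else 0)) := by
    intro i z
    by_cases hz : z ∈ U i
    · rw [if_pos hz]
      have hd : 0 < Metric.infDist z (U i)ᶜ := by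
        refine ((hUo i).isClosed_compl.notMem_iff_infDist_pos (hUne i)).mp ?_
        simpa using hz
      refine Filter.Tendsto.congr' ?_ tendsto_const_nhds
      filter_upwards [Filter.eventually_ge_atTop ⌈(Metric.infDist z (U i)ᶜ)⁻¹⌉₊] with m hm
      have h1 : (1 : ℝ) ≤ m * Metric.infDist z (U i)ᶜ := by
        have h2 : (Metric.infDist z (U i)ᶜ)⁻¹ ≤ (m : ℝ) :=
          le_trans (Nat.le_ceil _) (by exact_mod_cast hm)
        calc (1 : ℝ) = (Metric.infDist z (U i)ᶜ)⁻¹ * Metric.infDist z (U i)ᶜ := by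
              field_simp
          _ ≤ m * Metric.infDist z (U i)ᶜ := by
              exact mul_le_mul_of_nonneg_right h2 hd.le
      rw [hf]
      simp only [ContinuousMap.coe_mk]
      rw [min_eq_left h1]
      norm_num
    · rw [if_neg hz]
      have hd : Metric.infDist z (U i)ᶜ = 0 :=
        Metric.infDist_zero_of_mem (by simpa using hz)
      refine Filter.Tendsto.congr' (Filter.Eventually.of_forall fun m => ?_) tendsto_const_nhds
      rw [hf]
      simp [hd]
  -- pointwise limit of the product
  have hprod : ∀ x : ι → ℝ,
      Filter.Tendsto (fun m => ∏ i, f m i ((x i : ℝ) : AddCircle L)) Filter.atTop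
        (nhds (S.indicator (fun _ => (1 : ℂ)) x)) := by
    intro x
    have : S.indicator (fun _ => (1 : ℂ)) x
        = ∏ i, (if ((x i : ℝ) : AddCircle L) ∈ U i then (1 : ℂ) else 0) := by
      by_cases hx : x ∈ S
      · rw [indicator_of_mem hx]
        rw [hS] at hx
        simp only [mem_setOf_eq] at hx
        rw [Finset.prod_congr rfl fun i _ => if_pos (hx i)]
        simp
      · rw [indicator_of_notMem hx]
        rw [hS] at hx
        simp only [mem_setOf_eq, not_forall] at hx
        obtain ⟨i, hi⟩ := hx
        have hzero : (if ((x i : ℝ) : AddCircle L) ∈ U i then (1 : ℂ) else 0) = 0 := if_neg hi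
        exact (Finset.prod_eq_zero (Finset.mem_univ i) hzero).symm
    rw [this]
    exact tendsto_finset_prod _ fun i _ => hfac i _
  -- dominated convergence for both measures
  have hDCT : ∀ (m : Measure (ι → ℝ)), IsProbabilityMeasure m →
      Filter.Tendsto (fun p => ∫ x, ∏ i, f p i ((x i : ℝ) : AddCircle L) ∂m) Filter.atTop
        (nhds (∫ x, S.indicator (fun _ => (1 : ℂ)) x ∂m)) := by
    intro m hm
    refine tendsto_integral_of_dominated_convergence (fun _ => (1 : ℝ))
      (fun p => (contProdAux L (f p)).aestronglyMeasurable) (integrable_const 1)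
      (fun p => ae_of_all m fun x => ?_) (ae_of_all m hprod)
    rw [norm_prod]
    exact Finset.prod_le_one (fun i _ => norm_nonneg _) (fun i _ => hfnorm p i _)
  have heq : ∫ x, S.indicator (fun _ => (1 : ℂ)) x ∂μ
      = ∫ x, S.indicator (fun _ => (1 : ℂ)) x ∂ν := by
    refine tendsto_nhds_unique (hDCT μ inferInstance) ?_
    have : (fun p => ∫ x, ∏ i, f p i ((x i : ℝ) : AddCircle L) ∂μ)
        = fun p => ∫ x, ∏ i, f p i ((x i : ℝ) : AddCircle L) ∂ν := by
      funext p
      exact integral_periodic_prod_eq μ ν h L hL (f p)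
    rw [this]
    exact hDCT ν inferInstance
  rw [integral_indicator_const _ hSm, integral_indicator_const _ hSm] at heq
  have h1 : (μ S).toReal = (ν S).toReal := by
    have := congrArg Complex.re heq
    exact (by simpa using this : μ.real S = ν.real S)
  exact (ENNReal.toReal_eq_toReal_iff' (measure_ne_top μ S) (measure_ne_top ν S)).mp h1

/-- Step 3: equality of measures of open boxes. -/
private lemma measure_box_le
    (μ ν : Measure (ι → ℝ)) [IsProbabilityMeasure μ] [IsProbabilityMeasure ν]
    (h : ∀ ξ : ι → ℝ, ∫ x, Complex.exp (Complex.I * ((∑ i, ξ i * x i : ℝ) : ℂ)) ∂μ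
        = ∫ x, Complex.exp (Complex.I * ((∑ i, ξ i * x i : ℝ) : ℂ)) ∂ν)
    (a b : ι → ℝ) :
    μ (univ.pi fun i => Ioo (a i) (b i)) ≤ ν (univ.pi fun i => Ioo (a i) (b i)) := by
  classical
  set rect := univ.pi fun i => Ioo (a i) (b i) with hrect
  have hrectm : MeasurableSet rect := MeasurableSet.univ_pi fun i => measurableSet_Ioo
  set box : ℕ → Set (ι → ℝ) := fun m => univ.pi fun _ => Ioo (-(m : ℝ)) (m : ℝ) with hbox
  have hboxm : ∀ m, MeasurableSet (box m) :=
    fun m => MeasurableSet.univ_pi fun _ => measurableSet_Ioo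
  have hboxmono : Monotone box := by
    intro p q hpq
    refine pi_mono fun i _ => Ioo_subset_Ioo ?_ ?_
    · exact neg_le_neg (by exact_mod_cast hpq)
    · exact_mod_cast hpq
  obtain ⟨n₀, hn₀1, hn₀⟩ : ∃ n₀ : ℕ, 1 ≤ n₀ ∧ ∀ i, |a i| < n₀ ∧ |b i| < n₀ := by
    obtain ⟨R, hR⟩ := Finite.exists_le fun i => max |a i| |b i|
    obtain ⟨m, hm⟩ := exists_nat_gt (max R 1)
    refine ⟨m, ?_, fun i => ?_⟩
    · have : (1 : ℝ) ≤ m := le_of_lt (lt_of_le_of_lt (le_max_right R 1) hm)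
      exact_mod_cast this
    · constructor
      · exact lt_of_le_of_lt (le_trans (le_max_left _ _) (le_trans (hR i) (le_max_left R 1))) hm
      · exact lt_of_le_of_lt (le_trans (le_max_right _ _) (le_trans (hR i) (le_max_left R 1))) hm
  -- the key inequality for every large m
  have key : ∀ m : ℕ, n₀ ≤ m → μ rect ≤ ν rect + ν ((box m)ᶜ) := by
    intro m hm
    have hmpos : (0 : ℝ) < m := by
      have : (1 : ℝ) ≤ m := by exact_mod_cast le_trans hn₀1 hm
      linarith
    set L : ℝ := 2 * m with hLdef
    have hL : 0 < L := by positivity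
    set U : ι → Set (AddCircle L) := fun i =>
      (fun y : ℝ => (y : AddCircle L)) '' Ioo (a i) (b i) with hU
    have hUo : ∀ i, IsOpen (U i) := fun i =>
      QuotientAddGroup.isOpenMap_coe _ isOpen_Ioo
    have habs : ∀ (i : ι) (y : ℝ), y ∈ Ioo (a i) (b i) → |y| < m := by
      intro i y hy
      have h1 := (hn₀ i).1
      have h2 := (hn₀ i).2
      have hm' : (n₀ : ℝ) ≤ m := by exact_mod_cast hm
      rw [abs_lt]
      constructor
      · have := neg_abs_le (a i)
        have : -(m : ℝ) < a i := by
          have := (abs_lt.mp (lt_of_lt_of_le h1 hm')).1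
          linarith [this]
        linarith [hy.1]
      · have : b i < m := lt_of_lt_of_le (lt_of_le_of_lt (le_abs_self _) h2) hm'
        linarith [hy.2]
    -- k = 0 extraction
    have hcoe : ∀ (x y : ℝ), ((x : AddCircle L) = (y : AddCircle L)) → |x| < m → |y| ≤ m →
        x = y := by
      intro x y hxy hx hy
      rw [QuotientAddGroup.eq] at hxy
      obtain ⟨k, hk⟩ := AddSubgroup.mem_zmultiples_iff.mp hxy
      rw [zsmul_eq_mul] at hk
      have habsk : |(k : ℝ)| * L < L := by
        have h1 : |(k : ℝ) * L| < L := by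
          rw [hk, hLdef]
          rw [abs_lt] at hx ⊢
          rw [abs_le] at hy
          constructor <;> nlinarith [hx.1, hx.2, hy.1, hy.2]
        rwa [abs_mul, abs_of_pos hL] at h1
      have hk0 : k = 0 := by
        have h2 : |(k : ℝ)| < 1 := by
          by_contra hcon
          push_neg at hcon
          nlinarith
        refine Int.abs_lt_one_iff.mp ?_
        exact_mod_cast h2
      rw [hk0] at hk
      push_cast at hk
      linarith
    have hUne : ∀ i, (U i)ᶜ.Nonempty := by
      intro i
      refine ⟨((m : ℝ) : AddCircle L), fun hmem => ?_⟩
      obtain ⟨y, hy, hyeq⟩ := hmem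
      have hym : y = (m : ℝ) :=
        hcoe y (m : ℝ) hyeq (habs i y hy) (by rw [abs_of_pos hmpos])
      have hlt := habs i y hy
      rw [hym, abs_of_pos hmpos] at hlt
      exact lt_irrefl _ hlt
    set S := {x : ι → ℝ | ∀ i, ((x i : ℝ) : AddCircle L) ∈ U i} with hSdef
    have hSeq : μ S = ν S := measure_periodic_open_eq μ ν h L hL U hUo hUne
    have hsub1 : rect ⊆ S := by
      intro x hx i
      exact ⟨x i, hx i (mem_univ i), rfl⟩
    have hsub2 : S ⊆ rect ∪ (box m)ᶜ := by
      intro x hx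
      by_cases hxbox : x ∈ box m
      · left
        intro i _
        obtain ⟨y, hy, hyeq⟩ := hx i
        have hxi : |x i| < m := by
          have := hxbox i (mem_univ i)
          rw [abs_lt]
          exact ⟨this.1, this.2⟩
        have : y = x i := hcoe y (x i) hyeq (habs i y hy) hxi.le
        rwa [← this]
      · right
        exact hxbox
    calc μ rect ≤ μ S := measure_mono hsub1
      _ = ν S := hSeq
      _ ≤ ν (rect ∪ (box m)ᶜ) := measure_mono hsub2
      _ ≤ ν rect + ν ((box m)ᶜ) := measure_union_le _ _
  -- take the limit m → ∞
  have hiUnion : (⋃ m, box m) = univ := by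
    ext x
    simp only [mem_iUnion, mem_univ, iff_true]
    obtain ⟨R, hR⟩ := Finite.exists_le fun i => |x i|
    obtain ⟨m, hm⟩ := exists_nat_gt R
    refine ⟨m, fun i _ => ?_⟩
    have : |x i| < m := lt_of_le_of_lt (hR i) hm
    rw [abs_lt] at this
    exact ⟨this.1, this.2⟩
  have htend : Filter.Tendsto (fun m => ν ((box m)ᶜ)) Filter.atTop (nhds 0) := by
    have h1 : Filter.Tendsto (fun m => ν ((box m)ᶜ)) Filter.atTop
        (nhds (ν (⋂ m, (box m)ᶜ))) := by
      refine tendsto_measure_iInter_atTop (fun m => ((hboxm m).compl).nullMeasurableSet)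
        (fun p q hpq => compl_subset_compl.mpr (hboxmono hpq)) ⟨0, measure_ne_top _ _⟩
    have h2 : (⋂ m, (box m)ᶜ) = ∅ := by
      rw [← compl_iUnion, hiUnion, compl_univ]
    rwa [h2, measure_empty] at h1
  have hfinal : Filter.Tendsto (fun m => ν rect + ν ((box m)ᶜ)) Filter.atTop
      (nhds (ν rect + 0)) := Filter.Tendsto.const_add _ htend
  rw [add_zero] at hfinal
  exact ge_of_tendsto hfinal (Filter.eventually_atTop.mpr ⟨n₀, key⟩)

/-- Uniqueness of probability measures on `ι → ℝ` with equal characteristic functions. -/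
private lemma measure_ext_of_charFun
    (μ ν : Measure (ι → ℝ)) [IsProbabilityMeasure μ] [IsProbabilityMeasure ν]
    (h : ∀ ξ : ι → ℝ, ∫ x, Complex.exp (Complex.I * ((∑ i, ξ i * x i : ℝ) : ℂ)) ∂μ
        = ∫ x, Complex.exp (Complex.I * ((∑ i, ξ i * x i : ℝ) : ℂ)) ∂ν) :
    μ = ν := by
  classical
  have hrect : ∀ a b : ι → ℝ,
      μ (univ.pi fun i => Ioo (a i) (b i)) = ν (univ.pi fun i => Ioo (a i) (b i)) :=
    fun a b => le_antisymm (measure_box_le μ ν h a b)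
      (measure_box_le ν μ (fun ξ => (h ξ).symm) a b)
  set C : ∀ _ : ι, Set (Set ℝ) :=
    fun _ => ⋃ (p : ℚ) (q : ℚ) (_ : p < q), {Ioo (p : ℝ) (q : ℝ)} with hCdef
  have hspan : ∀ i : ι, IsCountablySpanning (C i) := by
    intro i
    refine ⟨fun m => Ioo ((-(m + 1) : ℚ) : ℝ) (((m + 1) : ℚ) : ℝ), fun m => ?_, ?_⟩
    · simp only [hCdef, mem_iUnion, mem_singleton_iff]
      refine ⟨-(m + 1), m + 1, ?_, rfl⟩
      have : (0 : ℚ) ≤ (m : ℚ) := by positivity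
      linarith
    · ext x
      simp only [mem_iUnion, mem_univ, iff_true, mem_Ioo]
      obtain ⟨m, hm⟩ := exists_nat_gt |x|
      rw [abs_lt] at hm
      refine ⟨m, ?_, ?_⟩ <;> push_cast <;> [linarith [hm.1]; linarith [hm.2]]
  have hgen : (inferInstance : MeasurableSpace (ι → ℝ))
      = MeasurableSpace.generateFrom (pi univ '' pi univ C) := by
    refine (generateFrom_eq_pi (fun _ => ?_) hspan).symm
    exact Real.borel_eq_generateFrom_Ioo_rat.symm.trans BorelSpace.measurable_eq.symm
  refine ext_of_generate_finite _ hgen (IsPiSystem.pi fun i => ?_) ?_ ?_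
  · simpa only [hCdef] using Real.isPiSystem_Ioo_rat
  · rintro _ ⟨t, ht, rfl⟩
    have : ∀ i : ι, ∃ (p q : ℚ), t i = Ioo (p : ℝ) (q : ℝ) := by
      intro i
      have := ht i (mem_univ i)
      simp only [hCdef, mem_iUnion, mem_singleton_iff] at this
      obtain ⟨p, q, _, hpq⟩ := this
      exact ⟨p, q, hpq⟩
    choose p q hpq using this
    have : univ.pi t = univ.pi fun i => Ioo ((p i : ℝ)) ((q i : ℝ)) := by
      refine pi_congr rfl fun i _ => hpq i
    rw [this]
    exact hrect _ _
  · simp [measure_univ]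

end CharFunUniqueness

/-- Currying measurable equivalence between `Fin n → Fin d → ℝ` and `Fin n × Fin d → ℝ`. -/
private def prodPiEquiv (n d : ℕ) : (Fin n → Fin d → ℝ) ≃ᵐ (Fin n × Fin d → ℝ) where
  toEquiv :=
    { toFun := fun f p => f p.1 p.2
      invFun := fun g r k => g (r, k)
      left_inv := fun f => rfl
      right_inv := fun g => rfl }
  measurable_toFun := measurable_pi_lambda _ fun p =>
    (measurable_pi_apply p.2).comp (measurable_pi_apply p.1)
  measurable_invFun := measurable_pi_lambda _ fun r => measurable_pi_lambda _ fun k =>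
    measurable_pi_apply (r, k)

/-- A `d`-dimensional process whose finite-dimensional characteristic functions are those
of a vector-valued generalized grey Brownian motion is self-similar with index `α/2`. -/
theorem vggBm_self_similar {Ω : Type*} [MeasurableSpace Ω]
    (μ : Measure Ω) [IsProbabilityMeasure μ] (β α : ℝ) (hβ : 0 < β) (hβ1 : β ≤ 1)
    (hα : 0 < α) (hα2 : α < 2) (d : ℕ) (hd : 1 ≤ d)
    (X : ℝ → Ω → Fin d → ℝ) (hX : ∀ t : ℝ, Measurable (X t))
    (hchar : ∀ n : ℕ, 1 ≤ n → ∀ t : Fin n → ℝ, (∀ r, 0 ≤ t r) →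
      ∀ p : Fin d → Fin n → ℝ,
      ∫ ω, Complex.exp (Complex.I * ((∑ r, ∑ k, p k r * X (t r) ω k : ℝ) : ℂ)) ∂μ
        = ∏ k, mittagLeffler β 1
            (-(1 / 2 : ℂ) * ((∑ r, ∑ q, p k r * p k q * ggBmCov α (t r) (t q) : ℝ) : ℂ))) :
    ∀ a : ℝ, 0 < a → ∀ n : ℕ, 1 ≤ n → ∀ t : Fin n → ℝ, (∀ r, 0 ≤ t r) →
      Measure.map (fun ω => fun r : Fin n => X (a * t r) ω) μ
        = Measure.map (fun ω => fun (r : Fin n) (k : Fin d) => a ^ (α / 2) * X (t r) ω k) μ := by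
  intro a ha n hn t ht
  classical
  -- uncurried maps
  set Fu : Ω → (Fin n × Fin d → ℝ) := fun ω p => X (a * t p.1) ω p.2 with hFu
  set Gu : Ω → (Fin n × Fin d → ℝ) := fun ω p => a ^ (α / 2) * X (t p.1) ω p.2 with hGu
  have hFum : Measurable Fu := measurable_pi_lambda _ fun p =>
    (measurable_pi_apply p.2).comp (hX _)
  have hGum : Measurable Gu := measurable_pi_lambda _ fun p =>
    measurable_const.mul ((measurable_pi_apply p.2).comp (hX _))
  -- scaling of the covariance kernel
  have haa : a ^ (α / 2) * a ^ (α / 2) = a ^ α := by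
    rw [← Real.rpow_add ha]
    norm_num
  have hcov : ∀ r q : Fin n, ggBmCov α (a * t r) (a * t q) = a ^ α * ggBmCov α (t r) (t q) := by
    intro r q
    unfold ggBmCov
    rw [Real.mul_rpow ha.le (ht r), Real.mul_rpow ha.le (ht q)]
    have habs : |a * t r - a * t q| = a * |t r - t q| := by
      rw [← mul_sub, abs_mul, abs_of_pos ha]
    rw [habs, Real.mul_rpow ha.le (abs_nonneg _)]
    ring
  -- key: equality of the uncurried pushforwards
  have key : Measure.map Fu μ = Measure.map Gu μ := by
    haveI : IsProbabilityMeasure (Measure.map Fu μ) :=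
      Measure.isProbabilityMeasure_map hFum.aemeasurable
    haveI : IsProbabilityMeasure (Measure.map Gu μ) :=
      Measure.isProbabilityMeasure_map hGum.aemeasurable
    refine measure_ext_of_charFun _ _ fun ξ => ?_
    have hcont : Continuous fun y : Fin n × Fin d → ℝ =>
        Complex.exp (Complex.I * ((∑ p, ξ p * y p : ℝ) : ℂ)) := by
      refine Complex.continuous_exp.comp (continuous_const.mul ?_)
      exact Complex.continuous_ofReal.comp
        (continuous_finset_sum _ fun p _ => continuous_const.mul (continuous_apply p))
    rw [integral_map hFum.aemeasurable hcont.aestronglyMeasurable,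
      integral_map hGum.aemeasurable hcont.aestronglyMeasurable]
    have h1 := hchar n hn (fun r => a * t r) (fun r => mul_nonneg ha.le (ht r))
      (fun k r => ξ (r, k))
    have h2 := hchar n hn t ht (fun k r => a ^ (α / 2) * ξ (r, k))
    have hLHS : ∀ ω, (∑ p : Fin n × Fin d, ξ p * Fu ω p)
        = ∑ r, ∑ k, ξ (r, k) * X (a * t r) ω k := by
      intro ω
      rw [Fintype.sum_prod_type]
    have hRHS : ∀ ω, (∑ p : Fin n × Fin d, ξ p * Gu ω p)
        = ∑ r, ∑ k, (a ^ (α / 2) * ξ (r, k)) * X (t r) ω k := by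
      intro ω
      rw [Fintype.sum_prod_type]
      exact Finset.sum_congr rfl fun r _ => Finset.sum_congr rfl fun k _ => by
        rw [hGu]; ring
    calc ∫ ω, Complex.exp (Complex.I * ((∑ p, ξ p * Fu ω p : ℝ) : ℂ)) ∂μ
        = ∫ ω, Complex.exp (Complex.I
            * ((∑ r, ∑ k, ξ (r, k) * X (a * t r) ω k : ℝ) : ℂ)) ∂μ := by
          simp_rw [hLHS]
      _ = ∏ k, mittagLeffler β 1 (-(1 / 2 : ℂ)
            * ((∑ r, ∑ q, ξ (r, k) * ξ (q, k) * ggBmCov α (a * t r) (a * t q) : ℝ) : ℂ)) := h1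
      _ = ∏ k, mittagLeffler β 1 (-(1 / 2 : ℂ)
            * ((∑ r, ∑ q, (a ^ (α / 2) * ξ (r, k)) * (a ^ (α / 2) * ξ (q, k))
                * ggBmCov α (t r) (t q) : ℝ) : ℂ)) := by
          refine Finset.prod_congr rfl fun k _ => ?_
          have hsum : (∑ r, ∑ q, ξ (r, k) * ξ (q, k) * ggBmCov α (a * t r) (a * t q))
              = ∑ r, ∑ q, (a ^ (α / 2) * ξ (r, k)) * (a ^ (α / 2) * ξ (q, k))
                  * ggBmCov α (t r) (t q) := by
            refine Finset.sum_congr rfl fun r _ => Finset.sum_congr rfl fun q _ => ?_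
            rw [hcov r q, ← haa]
            ring
          rw [hsum]
      _ = ∫ ω, Complex.exp (Complex.I
            * ((∑ r, ∑ k, (a ^ (α / 2) * ξ (r, k)) * X (t r) ω k : ℝ) : ℂ)) ∂μ := h2.symm
      _ = ∫ ω, Complex.exp (Complex.I * ((∑ p, ξ p * Gu ω p : ℝ) : ℂ)) ∂μ := by
          simp_rw [hRHS]
  -- curry back
  have e := prodPiEquiv n d
  calc Measure.map (fun ω => fun r : Fin n => X (a * t r) ω) μ
      = Measure.map (⇑(prodPiEquiv n d).symm ∘ Fu) μ := rfl
    _ = Measure.map (prodPiEquiv n d).symm (Measure.map Fu μ) :=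
        (Measure.map_map (prodPiEquiv n d).symm.measurable hFum).symm
    _ = Measure.map (prodPiEquiv n d).symm (Measure.map Gu μ) := by rw [key]
    _ = Measure.map (⇑(prodPiEquiv n d).symm ∘ Gu) μ :=
        Measure.map_map (prodPiEquiv n d).symm.measurable hGum
    _ = Measure.map (fun ω => fun (r : Fin n) (k : Fin d) => a ^ (α / 2) * X (t r) ω k) μ := rfl
end
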